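/- arXiv:1510.08528 — 6 statements merged into one kernel-verified Lean document; each statement's English description precedes it below -/
import Mathlib

section
/- Let q ∈ ℂ with 0 < |q| < 1, let y ∈ ℂ be nonzero with y ∉ {q^k : k ∈ ℤ}, and let m ∈ ℤ. Then the function u ↦ A(q, y, u) has a simple pole at u = q^m with residue −q^m y^{−m} B(q, y); that is, lim_{u → q^m} (u − q^m) · A(q, y, u) = −q^m y^{−m} B(q, y). -/
open Complex Filter Topology

/-- The Jacobi theta function θ₁(τ, z) = i·∑_{n∈ℤ} (−1)ⁿ e^{πiτ(n−1/2)²} e^{2πiz(n−1/2)}. -/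
noncomputable def theta1 (τ z : ℂ) : ℂ :=
  Complex.I * ∑' n : ℤ, (-1 : ℂ) ^ n *
    Complex.exp (Real.pi * Complex.I * τ * ((n : ℂ) - 1/2) ^ 2) *
    Complex.exp (2 * Real.pi * Complex.I * z * ((n : ℂ) - 1/2))

/-- The lattice ℤ + τℤ ⊂ ℂ. -/
def lattice (τ : ℂ) : Set ℂ := {w : ℂ | ∃ m n : ℤ, w = (m : ℂ) + (n : ℂ) * τ}

/-- A(q,y,u) = ∏_{n≥1} (1−yuq^{n−1})(1−(yu)⁻¹qⁿ) / ((1−uq^{n−1})(1−u⁻¹qⁿ)). -/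
noncomputable def A (q y u : ℂ) : ℂ :=
  ∏' n : ℕ, ((1 - y * u * q ^ n) * (1 - (y * u)⁻¹ * q ^ (n + 1))) /
    ((1 - u * q ^ n) * (1 - u⁻¹ * q ^ (n + 1)))

/-- B(q,y) = ∏_{n≥1} (1−yq^{n−1})(1−y⁻¹qⁿ) / (1−qⁿ)². -/
noncomputable def B (q y : ℂ) : ℂ :=
  ∏' n : ℕ, ((1 - y * q ^ n) * (1 - y⁻¹ * q ^ (n + 1))) / (1 - q ^ (n + 1)) ^ 2

/-- Equivariant elliptic genus of the toric CY 3-fold with fixed-point set `V`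
and weight vectors `w v j = (aʲᵥ, bʲᵥ)`. -/
noncomputable def Z {V : Type*} [Fintype V] (w : V → Fin 3 → ℤ × ℤ)
    (τ z t₁ t₂ : ℂ) : ℂ :=
  ∑ v : V, ∏ j : Fin 3,
    theta1 τ (z + ((w v j).1 : ℂ) * t₁ + ((w v j).2 : ℂ) * t₂) /
      theta1 τ (((w v j).1 : ℂ) * t₁ + ((w v j).2 : ℂ) * t₂)


section Helpers
variable {q y : ℂ}

noncomputable def P (q x : ℂ) : ℂ := ∏' n : ℕ, (1 - x * q ^ n)


lemma normb (hq : ‖q‖ < 1) {x : ℂ} (hx : ‖x‖ ≤ 1/2) (n : ℕ) : ‖x * q ^ n‖ ≤ 1/2 := by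
  rw [norm_mul, norm_pow]
  have h := mul_le_mul hx (pow_le_one₀ (norm_nonneg q) hq.le (n := n)) (by positivity) (by norm_num)
  linarith

lemma hasProd_P_small (hq : ‖q‖ < 1) {x : ℂ} (hx : ‖x‖ ≤ 1/2) :
    HasProd (fun n : ℕ => 1 - x * q ^ n) (P q x) := by
  have hne : ∀ n : ℕ, (1 : ℂ) - x * q ^ n ≠ 0 := by
    intro n h
    rw [sub_eq_zero] at h
    have := normb hq hx n
    rw [← h, norm_one] at this
    norm_num at this
  have hlog : Summable fun n : ℕ => Complex.log (1 - x * q ^ n) := by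
    apply Summable.of_norm_bounded (g := fun n : ℕ => 3/2 * (‖x‖ * ‖q‖ ^ n))
      (((summable_geometric_of_lt_one (norm_nonneg q) hq).mul_left ‖x‖).mul_left (3/2))
    intro n
    have h2 := Complex.norm_log_one_add_half_le_self (z := -(x * q ^ n))
      (by simpa using normb hq hx n)
    simp only [← sub_eq_add_neg, norm_neg, norm_mul, norm_pow] at h2
    exact h2
  exact (Complex.hasProd_of_hasSum_log hne hlog.hasSum).multipliable.hasProd

lemma P_small_eq_exp (hq : ‖q‖ < 1) {x : ℂ} (hx : ‖x‖ ≤ 1/2) :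
    P q x = Complex.exp (∑' n : ℕ, Complex.log (1 - x * q ^ n)) := by
  have hne : ∀ n : ℕ, (1 : ℂ) - x * q ^ n ≠ 0 := by
    intro n h
    rw [sub_eq_zero] at h
    have := normb hq hx n
    rw [← h, norm_one] at this
    norm_num at this
  have hlog : Summable fun n : ℕ => Complex.log (1 - x * q ^ n) := by
    apply Summable.of_norm_bounded (g := fun n : ℕ => 3/2 * (‖x‖ * ‖q‖ ^ n))
      (((summable_geometric_of_lt_one (norm_nonneg q) hq).mul_left ‖x‖).mul_left (3/2))
    intro n
    have h2 := Complex.norm_log_one_add_half_le_self (z := -(x * q ^ n))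
      (by simpa using normb hq hx n)
    simp only [← sub_eq_add_neg, norm_neg, norm_mul, norm_pow] at h2
    exact h2
  have := Complex.cexp_tsum_eq_tprod (f := fun n : ℕ => 1 - x * q ^ n) hne hlog
  exact this.symm

lemma P_small_ne_zero (hq : ‖q‖ < 1) {x : ℂ} (hx : ‖x‖ ≤ 1/2) : P q x ≠ 0 := by
  rw [P_small_eq_exp hq hx]; exact Complex.exp_ne_zero _

lemma exists_small (hq : ‖q‖ < 1) (x : ℂ) : ∃ N : ℕ, ‖x * q ^ N‖ ≤ 1/2 := by
  obtain ⟨N, hN⟩ := exists_pow_lt_of_lt_one (show (0:ℝ) < 1/(2*(‖x‖+1)) by positivity) hq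
  refine ⟨N, ?_⟩
  rw [norm_mul, norm_pow]
  have h1 : ‖x‖ * ‖q‖ ^ N ≤ (‖x‖+1) * (1/(2*(‖x‖+1))) := by
    apply mul_le_mul (by linarith [norm_nonneg x]) hN.le (by positivity) (by positivity)
  have h2 : (‖x‖+1) * (1/(2*(‖x‖+1))) = 1/2 := by
    have h3 : ‖x‖ + 1 ≠ 0 := by positivity
    field_simp
  linarith

lemma hasProd_P (hq : ‖q‖ < 1) (x : ℂ) :
    HasProd (fun n : ℕ => 1 - x * q ^ n) (P q x) := by
  obtain ⟨N, hN⟩ := exists_small hq x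
  have htail := hasProd_P_small hq hN
  have hfun : (fun n : ℕ => 1 - (x * q ^ N) * q ^ n)
      = fun n : ℕ => (fun k : ℕ => 1 - x * q ^ k) (n + N) := by
    funext n; simp only [pow_add]; ring
  rw [hfun] at htail
  have h2 := htail.prod_range_mul (f := fun k : ℕ => 1 - x * q ^ k) (k := N)
  exact h2.multipliable.hasProd

lemma P_split (hq : ‖q‖ < 1) (x : ℂ) (N : ℕ) :
    P q x = (∏ i ∈ Finset.range N, (1 - x * q ^ i)) * P q (x * q ^ N) := by
  have htail := hasProd_P hq (x * q ^ N)
  have hfun : (fun n : ℕ => 1 - (x * q ^ N) * q ^ n)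
      = fun n : ℕ => (fun k : ℕ => 1 - x * q ^ k) (n + N) := by
    funext n; simp only [pow_add]; ring
  rw [hfun] at htail
  exact (htail.prod_range_mul (f := fun k : ℕ => 1 - x * q ^ k) (k := N)).tprod_eq

lemma P_ne_zero (hq : ‖q‖ < 1) {x : ℂ} (hx : ∀ n : ℕ, x * q ^ n ≠ 1) : P q x ≠ 0 := by
  obtain ⟨N, hN⟩ := exists_small hq x
  rw [P_split hq x N]
  refine mul_ne_zero (Finset.prod_ne_zero_iff.2 fun i _ => ?_) (P_small_ne_zero hq hN)
  exact sub_ne_zero.2 fun h => hx i h.symm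

lemma P_continuousAt (hq : ‖q‖ < 1) (x₀ : ℂ) : ContinuousAt (P q) x₀ := by
  set R : ℝ := ‖x₀‖ + 1 with hR
  obtain ⟨N, hN⟩ := exists_small hq (R : ℂ)
  rw [norm_mul, norm_pow, Complex.norm_real] at hN
  have hRpos : (0:ℝ) < R := by positivity
  have hRnorm : ‖(R:ℝ)‖ = R := by rw [Real.norm_eq_abs, abs_of_pos hRpos]
  rw [hRnorm] at hN
  -- on ball 0 R, P q x = finite prod * exp (g x)
  have hball : ∀ x ∈ Metric.ball (0:ℂ) R, ‖x * q ^ N‖ ≤ 1/2 := by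
    intro x hx
    rw [norm_mul, norm_pow]
    rw [Metric.mem_ball, dist_zero_right] at hx
    calc ‖x‖ * ‖q‖ ^ N ≤ R * ‖q‖ ^ N := by gcongr
      _ ≤ 1/2 := hN
  have key : ∀ x ∈ Metric.ball (0:ℂ) R,
      P q x = (∏ i ∈ Finset.range N, (1 - x * q ^ i)) *
        Complex.exp (∑' n : ℕ, Complex.log (1 - x * q ^ N * q ^ n)) := by
    intro x hx
    rw [P_split hq x N, P_small_eq_exp hq (hball x hx)]
  -- continuity of the tsum
  have hcont : ContinuousOn
      (fun x : ℂ => ∑' n : ℕ, Complex.log (1 - x * q ^ N * q ^ n)) (Metric.ball 0 R) := by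
    apply continuousOn_tsum (u := fun n : ℕ => 3/2 * (1/2 * ‖q‖ ^ n))
    · intro n
      apply ContinuousOn.clog
      · fun_prop
      · intro x hx
        have h1 : ‖x * q ^ N * q ^ n‖ ≤ 1/2 := by
          rw [norm_mul, norm_pow]
          have := hball x hx
          have h2 : ‖q‖ ^ n ≤ 1 := pow_le_one₀ (norm_nonneg q) hq.le
          nlinarith [norm_nonneg (x * q ^ N)]
        rw [Complex.mem_slitPlane_iff]
        left
        have h3 := Complex.abs_re_le_norm (x * q ^ N * q ^ n)
        simp only [Complex.sub_re, Complex.one_re]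
        have : |(x * q ^ N * q ^ n).re| ≤ 1/2 := le_trans h3 h1
        cases abs_le.1 this with
        | intro hl hr => linarith
    · exact ((summable_geometric_of_lt_one (norm_nonneg q) hq).mul_left _).mul_left _
    · intro n x hx
      have h1 : ‖x * q ^ N * q ^ n‖ ≤ 1/2 * ‖q‖ ^ n := by
        rw [norm_mul]
        have := hball x hx
        gcongr
        exact le_of_eq (norm_pow q n)
      have h2 := Complex.norm_log_one_add_half_le_self (z := -(x * q ^ N * q ^ n))
        (by rw [norm_neg]; nlinarith [pow_le_one₀ (norm_nonneg q) hq.le (n := n), norm_nonneg (x*q^N), norm_nonneg q, pow_nonneg (norm_nonneg q) n])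
      rw [← sub_eq_add_neg, norm_neg] at h2
      calc ‖Complex.log (1 - x * q ^ N * q ^ n)‖ ≤ 3/2 * ‖x * q ^ N * q ^ n‖ := h2
        _ ≤ 3/2 * (1/2 * ‖q‖ ^ n) := by gcongr
  have hcont2 : ContinuousOn (fun x : ℂ => (∏ i ∈ Finset.range N, (1 - x * q ^ i)) *
      Complex.exp (∑' n : ℕ, Complex.log (1 - x * q ^ N * q ^ n))) (Metric.ball 0 R) := by
    apply ContinuousOn.mul
    · fun_prop
    · exact hcont.cexp
  have hmem : Metric.ball (0:ℂ) R ∈ 𝓝 x₀ := by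
    apply Metric.isOpen_ball.mem_nhds
    rw [Metric.mem_ball, dist_zero_right]; linarith
  have := (hcont2.continuousAt hmem)
  apply this.congr
  filter_upwards [hmem] with x hx using (key x hx).symm
lemma HasProd.div' {f g : ℕ → ℂ} {a b : ℂ} (hf : HasProd f a) (hg : HasProd g b) (hb : b ≠ 0) :
    HasProd (fun n => f n / g n) (a / b) := by
  exact Filter.Tendsto.congr (fun s => (Finset.prod_div_distrib _ _).symm) (Filter.Tendsto.div hf hg hb)

-- nonvanishing helpers
lemma Pu_ne_zero (hq : ‖q‖ < 1) (hq0 : q ≠ 0) {u : ℂ} (hu : ∀ k : ℤ, u ≠ q ^ k) :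
    P q u ≠ 0 := by
  refine P_ne_zero hq fun n h => hu (-(n:ℤ)) ?_
  have hqn : (q:ℂ) ^ n ≠ 0 := pow_ne_zero _ hq0
  rw [zpow_neg, zpow_natCast]
  field_simp at h ⊢
  linear_combination h

lemma Pqinv_ne_zero (hq : ‖q‖ < 1) (hq0 : q ≠ 0) {u : ℂ} (hu0 : u ≠ 0)
    (hu : ∀ k : ℤ, u ≠ q ^ k) : P q (q * u⁻¹) ≠ 0 := by
  refine P_ne_zero hq fun n h => hu ((n:ℤ) + 1) ?_
  rw [zpow_add_one₀ hq0, zpow_natCast]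
  field_simp at h
  linear_combination -h

lemma Pq_ne_zero (hq : ‖q‖ < 1) : P q q ≠ 0 := by
  refine P_ne_zero hq fun n h => ?_
  have : ‖q * q ^ n‖ < 1 := by
    rw [norm_mul, norm_pow]
    calc ‖q‖ * ‖q‖ ^ n ≤ ‖q‖ * 1 := by
          gcongr; exact pow_le_one₀ (norm_nonneg q) hq.le
      _ < 1 := by rwa [mul_one]
  rw [h, norm_one] at this
  norm_num at this

lemma A_eq (hq : ‖q‖ < 1) (hq0 : q ≠ 0) (y : ℂ) {u : ℂ} (hu0 : u ≠ 0)
    (hu : ∀ k : ℤ, u ≠ q ^ k) :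
    A q y u = P q (y * u) * P q (q * (y * u)⁻¹) / (P q u * P q (q * u⁻¹)) := by
  have hden : P q u * P q (q * u⁻¹) ≠ 0 :=
    mul_ne_zero (Pu_ne_zero hq hq0 hu) (Pqinv_ne_zero hq hq0 hu0 hu)
  have hnum := (hasProd_P hq (y * u)).mul (hasProd_P hq (q * (y * u)⁻¹))
  have hd := (hasProd_P hq u).mul (hasProd_P hq (q * u⁻¹))
  have h := hnum.div' hd hden
  have hfun : (fun n : ℕ => (1 - y * u * q ^ n) * (1 - q * (y * u)⁻¹ * q ^ n) /
      ((1 - u * q ^ n) * (1 - q * u⁻¹ * q ^ n)))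
      = fun n : ℕ => ((1 - y * u * q ^ n) * (1 - (y * u)⁻¹ * q ^ (n + 1))) /
      ((1 - u * q ^ n) * (1 - u⁻¹ * q ^ (n + 1))) := by
    funext n
    rw [pow_succ]
    ring_nf
  rw [hfun] at h
  exact h.tprod_eq

lemma B_eq (hq : ‖q‖ < 1) (y : ℂ) :
    B q y = P q y * P q (q * y⁻¹) / (P q q) ^ 2 := by
  have hq2 : (P q q) ^ 2 ≠ 0 := pow_ne_zero _ (Pq_ne_zero hq)
  have hnum := (hasProd_P hq y).mul (hasProd_P hq (q * y⁻¹))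
  have hd := (hasProd_P hq q).mul (hasProd_P hq q)
  have h := hnum.div' hd (by rw [← sq]; exact hq2)
  have hfun : (fun n : ℕ => (1 - y * q ^ n) * (1 - q * y⁻¹ * q ^ n) /
      ((1 - q * q ^ n) * (1 - q * q ^ n)))
      = fun n : ℕ => ((1 - y * q ^ n) * (1 - y⁻¹ * q ^ (n + 1))) / (1 - q ^ (n + 1)) ^ 2 := by
    funext n
    rw [pow_succ]
    ring_nf
  rw [hfun] at h
  rw [B, h.tprod_eq, sq]
lemma eventually_good (hq0 : q ≠ 0) (hq : ‖q‖ < 1) (m : ℤ) :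
    ∀ᶠ u in 𝓝[≠] (q ^ m), u ≠ 0 ∧ ∀ k : ℤ, u ≠ q ^ k := by
  have hq0' : (0:ℝ) < ‖q‖ := norm_pos_iff.2 hq0
  set ε : ℝ := ‖q‖ ^ m * (1 - ‖q‖) with hε
  have hεpos : 0 < ε := by
    apply mul_pos (zpow_pos hq0' m); linarith
  have hqm : ‖q ^ m‖ = ‖q‖ ^ m := norm_zpow q m
  rw [eventually_nhdsWithin_iff]
  filter_upwards [Metric.ball_mem_nhds (q ^ m) hεpos] with u hu hne
  rw [Metric.mem_ball, dist_eq_norm] at hu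
  constructor
  · rintro rfl
    rw [zero_sub, norm_neg, hqm] at hu
    nlinarith [zpow_pos hq0' m]
  · intro k hk
    subst hk
    rcases lt_trichotomy k m with h | h | h
    · -- k ≤ m - 1, ‖q^k‖ ≥ ‖q‖^(m-1)
      have h1 : ‖q‖ ^ (m-1) ≤ ‖q‖ ^ k :=
        zpow_le_zpow_right_of_le_one₀ hq0' hq.le (by omega)
      have h2 : ‖q‖ ^ k - ‖q‖ ^ m ≤ ‖q ^ k - q ^ m‖ := by
        have := norm_sub_norm_le (q ^ k) (q ^ m)
        rw [norm_zpow, norm_zpow] at this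
        linarith
      have h3 : ‖q‖ ^ (m-1) = ‖q‖ ^ m * ‖q‖⁻¹ := by
        rw [zpow_sub_one₀ (ne_of_gt hq0')]
      have hm := zpow_pos hq0' m
      have key : (1:ℝ) - ‖q‖ ≤ ‖q‖⁻¹ - 1 := by
        nlinarith [sq_nonneg (1-‖q‖), mul_inv_cancel₀ (ne_of_gt hq0'), inv_pos.2 hq0']
      have h4 : ε ≤ ‖q‖ ^ m * ‖q‖⁻¹ - ‖q‖ ^ m := by
        rw [hε]
        nlinarith [mul_le_mul_of_nonneg_left key hm.le]
      linarith
    · exact hne (by rw [h]; exact Set.mem_singleton _)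
    · -- k ≥ m + 1
      have h1 : ‖q‖ ^ k ≤ ‖q‖ ^ (m+1) :=
        zpow_le_zpow_right_of_le_one₀ hq0' hq.le (by omega)
      have h2 : ‖q‖ ^ m - ‖q‖ ^ k ≤ ‖q ^ k - q ^ m‖ := by
        have := norm_sub_norm_le (q ^ m) (q ^ k)
        rw [← norm_neg (q ^ m - q ^ k), neg_sub, norm_zpow, norm_zpow] at this
        linarith
      have h3 : ‖q‖ ^ (m+1) = ‖q‖ ^ m * ‖q‖ := zpow_add_one₀ (ne_of_gt hq0') m
      have h5 : ε = ‖q‖ ^ m - ‖q‖ ^ m * ‖q‖ := by rw [hε]; ring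
      linarith
lemma P_funeq (hq : ‖q‖ < 1) (x : ℂ) : P q x = (1 - x) * P q (x * q) := by
  simpa using P_split hq x 1

lemma Puq_ne_zero (hq : ‖q‖ < 1) (hq0 : q ≠ 0) {u : ℂ} (hu : ∀ k : ℤ, u ≠ q ^ k) :
    P q (u * q) ≠ 0 := by
  refine P_ne_zero hq fun n h => hu (-(n:ℤ)-1) ?_
  rw [sub_eq_add_neg, ← neg_add, zpow_neg, zpow_add₀ hq0, zpow_natCast, zpow_one]
  exact eq_inv_of_mul_eq_one_left (by linear_combination h)

lemma A_qper (hq : ‖q‖ < 1) (hq0 : q ≠ 0) (hy : y ≠ 0) {u : ℂ} (hu0 : u ≠ 0)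
    (hu : ∀ k : ℤ, u ≠ q ^ k) : A q y (q * u) = y⁻¹ * A q y u := by
  have hqu0 : q * u ≠ 0 := mul_ne_zero hq0 hu0
  have hqu : ∀ k : ℤ, q * u ≠ q ^ k := by
    intro k h
    apply hu (k - 1)
    rw [zpow_sub_one₀ hq0]
    field_simp at h ⊢
    linear_combination h
  rw [A_eq hq hq0 y hqu0 hqu, A_eq hq hq0 y hu0 hu]
  have E1 : P q (y * (q * u)) = P q (y * u * q) := by congr 1; ring
  have E2 : P q (q * (y * (q * u))⁻¹) = P q ((y * u)⁻¹) := by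
    congr 1; field_simp
  have E3 : P q (q * (q * u)⁻¹) = P q (u⁻¹) := by congr 1; field_simp
  have E4 : P q (q * u) = P q (u * q) := by congr 1; ring
  have E5 : P q (q * (y * u)⁻¹) = P q ((y * u)⁻¹ * q) := by congr 1; ring
  have E6 : P q (q * u⁻¹) = P q (u⁻¹ * q) := by congr 1; ring
  rw [E1, E2, E3, E4, E5, E6]
  rw [P_funeq hq ((y*u)⁻¹), P_funeq hq (u⁻¹), P_funeq hq (y*u), P_funeq hq u]
  have hc : P q (u * q) ≠ 0 := Puq_ne_zero hq hq0 hu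
  have hd : P q (u⁻¹ * q) ≠ 0 := by
    rw [show u⁻¹ * q = q * u⁻¹ from mul_comm _ _]; exact Pqinv_ne_zero hq hq0 hu0 hu
  have h1u : (1:ℂ) - u ≠ 0 := by
    rw [sub_ne_zero]; intro h; exact hu 0 (by rw [← h, zpow_zero])
  have h1ui : (1:ℂ) - u⁻¹ ≠ 0 := by
    rw [sub_ne_zero]; intro h
    have hu1 : u = 1 := by rw [← inv_inv u, ← h, inv_one]
    exact hu 0 (by rw [hu1, zpow_zero])
  set a := P q (y * u * q) with ha
  set b := P q ((y * u)⁻¹ * q) with hb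
  set c := P q (u * q) with hcc
  set d := P q (u⁻¹ * q) with hdd
  have h1 : c * ((1 - u⁻¹) * d) ≠ 0 := mul_ne_zero hc (mul_ne_zero h1ui hd)
  have h2 : (1 - u) * c * d ≠ 0 := mul_ne_zero (mul_ne_zero h1u hc) hd
  rw [← mul_div_assoc, div_eq_div_iff h1 h2]
  field_simp
  ring

lemma base_case (hq : ‖q‖ < 1) (hq0 : q ≠ 0) (hy : y ≠ 0) :
    Tendsto (fun u : ℂ => (u - 1) * A q y u) (𝓝[≠] (1:ℂ)) (𝓝 (-B q y)) := by
  set G : ℂ → ℂ := fun u => -(P q (y * u) * P q (q * (y * u)⁻¹)) / (P q (u * q) * P q (q * u⁻¹))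
    with hG
  have c1 : ContinuousAt (fun u : ℂ => P q (y * u)) 1 := by
    have h := ContinuousAt.comp (x := (1:ℂ)) (g := P q) (f := fun u : ℂ => y * u)
      (P_continuousAt hq (y * 1)) (by fun_prop)
    exact h
  have inner2 : ContinuousAt (fun u : ℂ => q * (y * u)⁻¹) 1 := by
    apply continuousAt_const.mul
    apply ContinuousAt.inv₀
    · fun_prop
    · simpa using hy
  have c2 : ContinuousAt (fun u : ℂ => P q (q * (y * u)⁻¹)) 1 := by
    have h := ContinuousAt.comp (x := (1:ℂ)) (g := P q) (f := fun u : ℂ => q * (y * u)⁻¹)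
      (P_continuousAt hq (q * (y * 1)⁻¹)) inner2
    exact h
  have c3 : ContinuousAt (fun u : ℂ => P q (u * q)) 1 := by
    have h := ContinuousAt.comp (x := (1:ℂ)) (g := P q) (f := fun u : ℂ => u * q)
      (P_continuousAt hq (1 * q)) (by fun_prop)
    exact h
  have inner4 : ContinuousAt (fun u : ℂ => q * u⁻¹) 1 := by
    apply continuousAt_const.mul
    apply ContinuousAt.inv₀
    · fun_prop
    · exact one_ne_zero
  have c4 : ContinuousAt (fun u : ℂ => P q (q * u⁻¹)) 1 := by
    have h := ContinuousAt.comp (x := (1:ℂ)) (g := P q) (f := fun u : ℂ => q * u⁻¹)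
      (P_continuousAt hq (q * 1⁻¹)) inner4
    exact h
  have hcG : ContinuousAt G 1 := by
    rw [hG]
    apply ContinuousAt.div ((c1.mul c2).neg) (c3.mul c4)
    simpa using mul_ne_zero (Pq_ne_zero hq) (Pq_ne_zero hq)
  have hG1 : G 1 = -B q y := by
    rw [hG]
    simp only [mul_one, one_mul, inv_one]
    rw [B_eq hq y, sq]
    ring
  have htend : Tendsto G (𝓝[≠] (1:ℂ)) (𝓝 (-B q y)) := by
    rw [← hG1]
    exact hcG.continuousWithinAt.tendsto
  apply htend.congr'
  have hev := eventually_good hq0 hq 0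
  rw [zpow_zero] at hev
  filter_upwards [hev] with u hgood
  obtain ⟨hu0, hu⟩ := hgood
  have hu1 : (1:ℂ) - u ≠ 0 := by
    rw [sub_ne_zero]; intro h; exact hu 0 (by rw [← h, zpow_zero])
  rw [A_eq hq hq0 y hu0 hu, P_funeq hq u, hG]
  have hc : P q (u * q) ≠ 0 := Puq_ne_zero hq hq0 hu
  have hd : P q (q * u⁻¹) ≠ 0 := Pqinv_ne_zero hq hq0 hu0 hu
  set n1 := P q (y * u) with hn1
  set n2 := P q (q * (y * u)⁻¹) with hn2
  set c := P q (u * q) with hcc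
  set d := P q (q * u⁻¹) with hdd
  rw [← mul_div_assoc]
  show -(n1 * n2) / (c * d) = (u - 1) * (n1 * n2) / ((1 - u) * c * d)
  rw [div_eq_div_iff (by exact mul_ne_zero hc hd)
    (by exact mul_ne_zero (mul_ne_zero hu1 hc) hd)]
  ring

lemma step_up (hq : ‖q‖ < 1) (hq0 : q ≠ 0) (hy : y ≠ 0) (m : ℤ)
    (hS : Tendsto (fun u : ℂ => (u - q ^ m) * A q y u)
      (𝓝[≠] (q ^ m)) (𝓝 (-(q ^ m) * y ^ (-m) * B q y))) :
    Tendsto (fun u : ℂ => (u - q ^ (m+1)) * A q y u)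
      (𝓝[≠] (q ^ (m+1))) (𝓝 (-(q ^ (m+1)) * y ^ (-(m+1)) * B q y)) := by
  have hval : q⁻¹ * q ^ (m+1) = q ^ m := by
    rw [zpow_add_one₀ hq0]; field_simp
  have hψ : Tendsto (fun u : ℂ => q⁻¹ * u) (𝓝[≠] (q ^ (m+1))) (𝓝[≠] (q ^ m)) := by
    rw [tendsto_nhdsWithin_iff]
    constructor
    · have h := (continuous_mul_left (q⁻¹ : ℂ)).tendsto (q ^ (m+1))
      rw [hval] at h
      exact h.mono_left nhdsWithin_le_nhds
    · filter_upwards [self_mem_nhdsWithin] with u hu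
      intro h
      rw [Set.mem_singleton_iff] at h
      apply hu
      rw [Set.mem_singleton_iff]
      have : u = q * (q ^ m) := by
        rw [← h]; field_simp
      rw [this, mul_comm q (q ^ m), ← zpow_add_one₀ hq0]
  have hcomp := hS.comp hψ
  have hmul := hcomp.const_mul (q * y⁻¹)
  have hvaleq : (q * y⁻¹) * (-(q ^ m) * y ^ (-m) * B q y)
      = -(q ^ (m+1)) * y ^ (-(m+1)) * B q y := by
    rw [zpow_add_one₀ hq0 m, show (-(m+1) : ℤ) = -m + -1 by ring, zpow_add₀ hy, zpow_neg_one]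
    ring
  rw [hvaleq] at hmul
  apply hmul.congr'
  filter_upwards [hψ.eventually (eventually_good hq0 hq m)] with u hgood
  obtain ⟨h0, hk⟩ := hgood
  have hA : A q y u = y⁻¹ * A q y (q⁻¹ * u) := by
    rw [← A_qper hq hq0 hy h0 hk]
    congr 1
    field_simp
  simp only [Function.comp]
  rw [hA, zpow_add_one₀ hq0 m]
  have hu0 : u ≠ 0 := by
    intro h; exact h0 (by rw [h, mul_zero])
  field_simp

lemma step_down (hq : ‖q‖ < 1) (hq0 : q ≠ 0) (hy : y ≠ 0) (m : ℤ)
    (hS : Tendsto (fun u : ℂ => (u - q ^ m) * A q y u)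
      (𝓝[≠] (q ^ m)) (𝓝 (-(q ^ m) * y ^ (-m) * B q y))) :
    Tendsto (fun u : ℂ => (u - q ^ (m-1)) * A q y u)
      (𝓝[≠] (q ^ (m-1))) (𝓝 (-(q ^ (m-1)) * y ^ (-(m-1)) * B q y)) := by
  have hval : q * q ^ (m-1) = q ^ m := by
    rw [zpow_sub_one₀ hq0]; field_simp
  have hφ : Tendsto (fun u : ℂ => q * u) (𝓝[≠] (q ^ (m-1))) (𝓝[≠] (q ^ m)) := by
    rw [tendsto_nhdsWithin_iff]
    constructor
    · have h := (continuous_mul_left (q : ℂ)).tendsto (q ^ (m-1))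
      rw [hval] at h
      exact h.mono_left nhdsWithin_le_nhds
    · filter_upwards [self_mem_nhdsWithin] with u hu
      intro h
      rw [Set.mem_singleton_iff] at h
      apply hu
      rw [Set.mem_singleton_iff]
      have : u = q⁻¹ * (q ^ m) := by
        rw [← h]; field_simp
      rw [this, zpow_sub_one₀ hq0]; ring
  have hcomp := hS.comp hφ
  have hmul := hcomp.const_mul (q⁻¹ * y)
  have hvaleq : (q⁻¹ * y) * (-(q ^ m) * y ^ (-m) * B q y)
      = -(q ^ (m-1)) * y ^ (-(m-1)) * B q y := by
    rw [zpow_sub_one₀ hq0 m, show (-(m-1) : ℤ) = -m + 1 by ring, zpow_add₀ hy, zpow_one]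
    ring
  rw [hvaleq] at hmul
  apply hmul.congr'
  filter_upwards [eventually_good hq0 hq (m-1)] with u hgood
  obtain ⟨h0, hk⟩ := hgood
  simp only [Function.comp]
  rw [A_qper hq hq0 hy h0 hk, zpow_sub_one₀ hq0 m]
  field_simp

end Helpers

/-- u ↦ A(q,y,u) has a simple pole at u = qᵐ with residue −qᵐ y^{−m} B(q,y). -/
theorem residue_A_at_qm (q y : ℂ) (hq0 : 0 < ‖q‖) (hq1 : ‖q‖ < 1)
    (hy : y ≠ 0) (hy' : ∀ k : ℤ, y ≠ q ^ k) (m : ℤ) :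
    Filter.Tendsto (fun u : ℂ => (u - q ^ m) * A q y u)
      (𝓝[≠] (q ^ m)) (𝓝 (-(q ^ m) * y ^ (-m) * B q y)) := by
  have hq' : ‖q‖ < 1 := by simpa using hq1
  have hqne : q ≠ 0 := by
    intro h; rw [h] at hq0; simp at hq0
  induction m using Int.induction_on with
  | zero => simpa using base_case hq' hqne hy
  | succ i ih => exact step_up hq' hqne hy i ih
  | pred i ih => exact step_down hq' hqne hy (-(i:ℤ)) ih
end

section
/- Let q ∈ ℂ with 0 < |q| < 1, let y ∈ ℂ be nonzero with y ∉ {q^k : k ∈ ℤ}, and let m ∈ ℤ. Then the function u ↦ A(q, y, u^{−1}) has a simple pole at u = q^m with residue q^m y^{m} B(q, y); that is, lim_{u → q^m} (u − q^m) · A(q, y, u^{−1}) = q^m y^{m} B(q, y). -/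
open Complex Filter Topology

namespace ResidueAux

variable {q : ℂ}

noncomputable def P1 (q c : ℂ) : ℂ := ∏' n : ℕ, (1 - c * q ^ n)

noncomputable def FF (q v : ℂ) : ℂ := P1 q v * P1 q (q * v⁻¹)

noncomputable def GG (q y v : ℂ) : ℂ := FF q (y * v) / FF q v

lemma term_ne_zero {x : ℂ} (h : ‖x‖ < 1) : (1 : ℂ) - x ≠ 0 := by
  intro h0
  have hx : x = 1 := by linear_combination -h0
  rw [hx] at h
  simp at h

lemma abs_term_le (hq1 : ‖q‖ < 1) {c : ℂ} (hc : ‖c‖ ≤ 1 / 2) (n : ℕ) :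
    ‖c * q ^ n‖ ≤ 1 / 2 * ‖q‖ ^ n := by
  rw [norm_mul, norm_pow]
  exact mul_le_mul_of_nonneg_right hc (by positivity)

lemma abs_term_le' (hq1 : ‖q‖ < 1) {c : ℂ} (hc : ‖c‖ ≤ 1 / 2) (n : ℕ) :
    ‖c * q ^ n‖ ≤ 1 / 2 :=
  (abs_term_le hq1 hc n).trans (by
    have h1 : ‖q‖ ^ n ≤ 1 := pow_le_one₀ (norm_nonneg q) hq1.le
    nlinarith)

lemma log_bound (hq1 : ‖q‖ < 1) {c : ℂ} (hc : ‖c‖ ≤ 1 / 2) (n : ℕ) :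
    ‖Complex.log (1 - c * q ^ n)‖ ≤ 3 / 2 * (1 / 2) * ‖q‖ ^ n := by
  have h1 : ‖(-(c * q ^ n) : ℂ)‖ ≤ 1 / 2 := by
    rw [norm_neg]
    exact abs_term_le' hq1 hc n
  calc ‖Complex.log (1 - c * q ^ n)‖
      = ‖Complex.log (1 + -(c * q ^ n))‖ := by rw [sub_eq_add_neg]
    _ ≤ 3 / 2 * ‖(-(c * q ^ n) : ℂ)‖ := Complex.norm_log_one_add_half_le_self h1
    _ ≤ 3 / 2 * (1 / 2 * ‖q‖ ^ n) := by
        rw [norm_neg]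
        exact mul_le_mul_of_nonneg_left (abs_term_le hq1 hc n) (by norm_num)
    _ = 3 / 2 * (1 / 2) * ‖q‖ ^ n := by ring

lemma summable_log (hq1 : ‖q‖ < 1) {c : ℂ} (hc : ‖c‖ ≤ 1 / 2) :
    Summable fun n : ℕ => Complex.log (1 - c * q ^ n) := by
  refine Summable.of_norm_bounded
    (g := fun n : ℕ => 3 / 2 * (1 / 2) * ‖q‖ ^ n)
    (((summable_geometric_of_lt_one (norm_nonneg q) hq1).mul_left _)) fun n =>
    log_bound hq1 hc n

lemma mult_shift (hq1 : ‖q‖ < 1) {c : ℂ} (hc : ‖c‖ ≤ 1 / 2) :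
    Multipliable fun n : ℕ => 1 - c * q ^ n :=
  Complex.multipliable_of_summable_log (summable_log hq1 hc)

lemma exists_tail (c : ℂ) (hq1 : ‖q‖ < 1) :
    ∃ N : ℕ, ‖c * q ^ N‖ ≤ 1 / 2 := by
  have h := tendsto_pow_atTop_nhds_zero_of_lt_one (norm_nonneg q) hq1
  have h2 : Tendsto (fun n : ℕ => ‖c‖ * ‖q‖ ^ n) atTop (𝓝 0) := by
    simpa using h.const_mul (‖c‖)
  have h3 := h2.eventually_le_const (show (0:ℝ) < 1/2 by norm_num)
  obtain ⟨N, hN⟩ := h3.exists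
  exact ⟨N, by rwa [norm_mul, norm_pow]⟩

lemma mult1 (hq1 : ‖q‖ < 1) (c : ℂ) :
    Multipliable fun n : ℕ => 1 - c * q ^ n := by
  obtain ⟨N, hN⟩ := exists_tail c hq1
  apply Multipliable.comp_nat_add (k := N)
  have h : (fun n : ℕ => 1 - c * q ^ (n + N)) = fun n : ℕ => 1 - c * q ^ N * q ^ n := by
    funext n; rw [pow_add]; ring
  rw [h]
  exact mult_shift hq1 hN

lemma exp_tsum_eq (hq1 : ‖q‖ < 1) {c : ℂ} (hc : ‖c‖ ≤ 1 / 2) :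
    Complex.exp (∑' n : ℕ, Complex.log (1 - c * q ^ n)) = ∏' n : ℕ, (1 - c * q ^ n) :=
  Complex.cexp_tsum_eq_tprod
    (fun n => term_ne_zero (lt_of_le_of_lt (abs_term_le' hq1 hc n) (by norm_num)))
    (summable_log hq1 hc)

lemma tail_tprod_ne_zero (hq1 : ‖q‖ < 1) {c : ℂ} (hc : ‖c‖ ≤ 1 / 2) :
    (∏' n : ℕ, (1 - c * q ^ n)) ≠ 0 := by
  rw [← exp_tsum_eq hq1 hc]; exact Complex.exp_ne_zero _

lemma P1_ne_zero (hq1 : ‖q‖ < 1) {c : ℂ} (hc : ∀ n : ℕ, 1 - c * q ^ n ≠ 0) :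
    P1 q c ≠ 0 := by
  obtain ⟨N, hN⟩ := exists_tail c hq1
  have hshift : (fun n : ℕ => 1 - c * q ^ (n + N)) = fun n : ℕ => 1 - c * q ^ N * q ^ n := by
    funext n; rw [pow_add]; ring
  have hm : Multipliable fun n : ℕ => 1 - c * q ^ (n + N) := by
    rw [hshift]; exact mult_shift hq1 hN
  rw [P1, ← Multipliable.prod_mul_tprod_nat_mul' (f := fun n : ℕ => 1 - c * q ^ n) (k := N) hm]
  refine mul_ne_zero (Finset.prod_ne_zero_iff.mpr fun n _ => hc n) ?_
  rw [hshift]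
  exact tail_tprod_ne_zero hq1 hN

lemma P1_factor (hq1 : ‖q‖ < 1) (c : ℂ) :
    P1 q c = (1 - c) * P1 q (q * c) := by
  have hshift : (fun n : ℕ => 1 - c * q ^ (n + 1)) = fun n : ℕ => 1 - q * c * q ^ n := by
    funext n; rw [pow_add]; ring
  have hm : Multipliable fun n : ℕ => 1 - c * q ^ (n + 1) := by
    rw [hshift]; exact mult1 hq1 (q * c)
  rw [P1, tprod_eq_zero_mul' (f := fun n : ℕ => 1 - c * q ^ n) hm, pow_zero, mul_one, P1]
  congr 1
  rw [← hshift]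

lemma hasProd_div {f g : ℕ → ℂ} {P Q : ℂ} (hf : HasProd f P) (hg : HasProd g Q)
    (hQ : Q ≠ 0) : HasProd (fun n => f n / g n) (P / Q) := by
  have h := Filter.Tendsto.div hf hg hQ
  refine h.congr fun s => ?_
  simp [Finset.prod_div_distrib]


lemma contP1 (hq1 : ‖q‖ < 1) (c₀ : ℂ) :
    ContinuousAt (fun c : ℂ => P1 q c) c₀ := by
  obtain ⟨N, hN⟩ : ∃ N : ℕ, (‖c₀‖ + 1) * ‖q‖ ^ N ≤ 1 / 2 := by
    have h := tendsto_pow_atTop_nhds_zero_of_lt_one (norm_nonneg q) hq1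
    have h2 : Tendsto (fun n : ℕ => (‖c₀‖ + 1) * ‖q‖ ^ n) atTop (𝓝 0) := by
      simpa using h.const_mul (‖c₀‖ + 1)
    exact (h2.eventually_le_const (by norm_num)).exists
  have hball : ∀ c ∈ Metric.ball c₀ 1, ‖c * q ^ N‖ ≤ 1 / 2 := by
    intro c hc
    have h1 : ‖c‖ ≤ ‖c₀‖ + 1 := by
      have h2 := norm_sub_norm_le c c₀
      have h3 : dist c c₀ < 1 := Metric.mem_ball.mp hc
      rw [dist_eq_norm] at h3
      linarith
    rw [norm_mul, norm_pow]
    calc ‖c‖ * ‖q‖ ^ N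
        ≤ (‖c₀‖ + 1) * ‖q‖ ^ N :=
          mul_le_mul_of_nonneg_right h1 (by positivity)
      _ ≤ 1 / 2 := hN
  set g : ℂ → ℂ := fun c =>
    (∏ n ∈ Finset.range N, (1 - c * q ^ n)) *
      Complex.exp (∑' n : ℕ, Complex.log (1 - c * q ^ N * q ^ n)) with hg
  have heq : ∀ c ∈ Metric.ball c₀ 1, P1 q c = g c := by
    intro c hc
    have hc' := hball c hc
    have hshift : (fun n : ℕ => 1 - c * q ^ (n + N)) = fun n : ℕ => 1 - c * q ^ N * q ^ n := by
      funext n; rw [pow_add]; ring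
    have hm : Multipliable fun n : ℕ => 1 - c * q ^ (n + N) := by
      rw [hshift]; exact mult_shift hq1 hc'
    rw [P1, ← Multipliable.prod_mul_tprod_nat_mul' (f := fun n : ℕ => 1 - c * q ^ n) (k := N) hm, hg]
    congr 1
    rw [hshift, ← exp_tsum_eq hq1 hc']
  have hcg : ContinuousAt g c₀ := by
    apply ContinuousAt.mul
    · exact (continuous_finset_prod (Finset.range N) fun i _ => by continuity).continuousAt
    · refine Complex.continuous_exp.continuousAt.comp ?_
      have hbound : ∀ (n : ℕ) (c : ℂ), c ∈ Metric.ball c₀ 1 →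
          ‖Complex.log (1 - c * q ^ N * q ^ n)‖ ≤ 3 / 2 * (1 / 2) * ‖q‖ ^ n := by
        intro n c hc
        exact log_bound hq1 (hball c hc) n
      have tuo := tendstoUniformlyOn_tsum
        (f := fun (n : ℕ) (c : ℂ) => Complex.log (1 - c * q ^ N * q ^ n))
        (((summable_geometric_of_lt_one (norm_nonneg q) hq1).mul_left (3 / 2 * (1 / 2))))
        hbound
      have hcont : ContinuousOn (fun c : ℂ => ∑' n : ℕ, Complex.log (1 - c * q ^ N * q ^ n))
          (Metric.ball c₀ 1) := by
        refine tuo.continuousOn (Filter.Frequently.of_forall fun t => ?_)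
        refine continuousOn_finset_sum t fun i _ => ?_
        intro c hc
        refine (ContinuousAt.clog (by fun_prop) ?_).continuousWithinAt
        have h1 : ‖(-(c * q ^ N * q ^ i) : ℂ)‖ < 1 := by
          rw [norm_neg, mul_assoc]
          calc ‖c * (q ^ N * q ^ i)‖ = ‖c * q ^ N * q ^ i‖ := by
                rw [mul_assoc]
            _ ≤ 1 / 2 := by
                have := abs_term_le' hq1 (hball c hc) i
                rwa [mul_assoc] at this ⊢
            _ < 1 := by norm_num
        have := Complex.mem_slitPlane_of_norm_lt_one h1
        rwa [← sub_eq_add_neg] at this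
      exact hcont.continuousAt (Metric.ball_mem_nhds c₀ one_pos)
  have hev : g =ᶠ[𝓝 c₀] fun c : ℂ => P1 q c :=
    Filter.eventuallyEq_of_mem (Metric.ball_mem_nhds c₀ one_pos) fun c hc => (heq c hc).symm
  exact hcg.congr hev


lemma FF_step (hq1 : ‖q‖ < 1) (hq : q ≠ 0) {v : ℂ} (hv : v ≠ 0) :
    FF q (q * v) = -v⁻¹ * FF q v := by
  have h1 : q * (q * v)⁻¹ = v⁻¹ := by field_simp
  rw [FF, FF, h1, P1_factor hq1 v⁻¹, P1_factor hq1 v]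
  have h2 : (1 : ℂ) - v⁻¹ = -v⁻¹ * (1 - v) := by
    rw [mul_sub, mul_one, neg_mul, inv_mul_cancel₀ hv]; ring
  rw [h2]
  ring

lemma GG_qmul (hq1 : ‖q‖ < 1) (hq : q ≠ 0) {y : ℂ} (hy : y ≠ 0) {v : ℂ}
    (hv : v ≠ 0) : GG q y (q * v) = y⁻¹ * GG q y v := by
  have h1 : y * (q * v) = q * (y * v) := by ring
  rw [GG, GG, h1, FF_step hq1 hq (mul_ne_zero hy hv), FF_step hq1 hq hv]
  have h2 : -(y * v)⁻¹ * FF q (y * v) = -v⁻¹ * (y⁻¹ * FF q (y * v)) := by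
    rw [mul_inv]; ring
  rw [h2, mul_div_mul_left _ _ (neg_ne_zero.mpr (inv_ne_zero hv)), mul_div_assoc]

lemma GG_inv_qmul (hq1 : ‖q‖ < 1) (hq : q ≠ 0) {y : ℂ} (hy : y ≠ 0) {v : ℂ}
    (hv : v ≠ 0) : GG q y (q⁻¹ * v) = y * GG q y v := by
  have h := GG_qmul hq1 hq hy (v := q⁻¹ * v) (mul_ne_zero (inv_ne_zero hq) hv)
  rw [show q * (q⁻¹ * v) = v by field_simp] at h
  rw [h, ← mul_assoc, mul_inv_cancel₀ hy, one_mul]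

lemma GG_iter (hq1 : ‖q‖ < 1) (hq : q ≠ 0) {y : ℂ} (hy : y ≠ 0) :
    ∀ (k : ℤ) {v : ℂ}, v ≠ 0 → GG q y (q ^ k * v) = y ^ (-k) * GG q y v := by
  intro k
  induction k using Int.induction_on with
  | zero => intro v hv; simp
  | succ i ih =>
    intro v hv
    have h1 : q ^ ((i : ℤ) + 1) * v = q ^ (i : ℤ) * (q * v) := by
      rw [zpow_add_one₀ hq]; ring
    rw [h1, ih (mul_ne_zero hq hv), GG_qmul hq1 hq hy hv]
    rw [show (-((i : ℤ) + 1)) = -(i : ℤ) - 1 by ring, zpow_sub_one₀ hy]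
    ring
  | pred i ih =>
    intro v hv
    have h1 : q ^ (-(i : ℤ) - 1) * v = q ^ (-(i : ℤ)) * (q⁻¹ * v) := by
      rw [zpow_sub_one₀ hq]; ring
    rw [h1, ih (mul_ne_zero (inv_ne_zero hq) hv), GG_inv_qmul hq1 hq hy hv]
    rw [show (-(-(i : ℤ) - 1)) = (i : ℤ) + 1 by ring, show (-(-(i : ℤ))) = (i : ℤ) by ring,
      zpow_add_one₀ hy]
    ring

lemma A_eq (hq1 : ‖q‖ < 1) (y : ℂ) {v : ℂ}
    (hden1 : ∀ n : ℕ, 1 - v * q ^ n ≠ 0) (hden2 : ∀ n : ℕ, 1 - q * v⁻¹ * q ^ n ≠ 0) :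
    A q y v = GG q y v := by
  have h1 : HasProd (fun n : ℕ => 1 - y * v * q ^ n) (P1 q (y * v)) :=
    (mult1 hq1 (y * v)).hasProd
  have h2 : HasProd (fun n : ℕ => 1 - q * (y * v)⁻¹ * q ^ n) (P1 q (q * (y * v)⁻¹)) :=
    (mult1 hq1 (q * (y * v)⁻¹)).hasProd
  have h3 : HasProd (fun n : ℕ => 1 - v * q ^ n) (P1 q v) := (mult1 hq1 v).hasProd
  have h4 : HasProd (fun n : ℕ => 1 - q * v⁻¹ * q ^ n) (P1 q (q * v⁻¹)) :=
    (mult1 hq1 (q * v⁻¹)).hasProd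
  have hQ : FF q v ≠ 0 :=
    mul_ne_zero (P1_ne_zero hq1 hden1) (P1_ne_zero hq1 hden2)
  have h5 := hasProd_div (h1.mul h2) (h3.mul h4) hQ
  rw [A, GG, FF, FF, ← h5.tprod_eq]
  refine tprod_congr fun n => ?_
  rw [pow_succ]
  ring_nf


lemma zpow_abs_le (hq0 : 0 < ‖q‖) (hq1 : ‖q‖ < 1) {j : ℤ} (hj : 1 ≤ j) :
    ‖q‖ ^ j ≤ ‖q‖ := by
  lift j to ℕ using (by omega : (0:ℤ) ≤ j)
  rw [zpow_natCast]
  have hj' : 1 ≤ j := by exact_mod_cast hj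
  exact pow_le_of_le_one hq0.le hq1.le (by omega)

lemma isolated (hq0 : 0 < ‖q‖) (hq1 : ‖q‖ < 1) (m : ℤ) :
    ∀ᶠ u in 𝓝[≠] (q ^ m : ℂ), u ≠ 0 ∧ ∀ k : ℤ, u ≠ q ^ k := by
  have hq : q ≠ 0 := by
    intro h; rw [h] at hq0; simp at hq0
  have hqm : (q : ℂ) ^ m ≠ 0 := zpow_ne_zero m hq
  have habsm : 0 < ‖q ^ m‖ := norm_pos_iff.mpr hqm
  set r := ‖q‖ with hr
  have hrinv : 1 < r⁻¹ := (one_lt_inv₀ hq0).mpr hq1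
  set δ : ℝ := ‖q ^ m‖ * min (1 - r) (r⁻¹ - 1) with hδ
  have hδ0 : 0 < δ := mul_pos habsm (lt_min (by linarith) (by linarith))
  set ε : ℝ := min δ (‖q ^ m‖) with hε
  have hε0 : 0 < ε := lt_min hδ0 habsm
  have hball : ∀ᶠ u in 𝓝 (q ^ m : ℂ), u ∈ Metric.ball (q ^ m : ℂ) ε :=
    Filter.eventually_of_mem (Metric.ball_mem_nhds _ hε0) fun u hu => hu
  filter_upwards [hball.filter_mono nhdsWithin_le_nhds, self_mem_nhdsWithin] with u hu hne
  have hne' : u ≠ q ^ m := hne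
  have hdist : ‖u - q ^ m‖ < ε := by
    have := Metric.mem_ball.mp hu
    rwa [Complex.dist_eq] at this
  constructor
  · intro h0
    rw [h0] at hdist
    have : ‖0 - q ^ m‖ = ‖q ^ m‖ := by simp
    rw [this] at hdist
    have : ε ≤ ‖q ^ m‖ := min_le_right _ _
    linarith
  · intro k hk
    rcases eq_or_ne k m with rfl | hkm
    · exact hne' hk
    have hj : k - m ≠ 0 := sub_ne_zero_of_ne hkm
    have hfac : (q : ℂ) ^ k - q ^ m = q ^ m * (q ^ (k - m) - 1) := by
      rw [mul_sub, mul_one, ← zpow_add₀ hq]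
      congr 2
      ring
    have hlow : min (1 - r) (r⁻¹ - 1) ≤ ‖q ^ (k - m) - 1‖ := by
      rcases lt_or_gt_of_ne hj with hneg | hpos
      · -- k - m ≤ -1 : |q^(k-m)| ≥ r⁻¹
        have h1 : r⁻¹ ≤ ‖q ^ (k - m)‖ := by
          rw [norm_zpow]
          have h2 : r ^ (-(k - m)) ≤ r := zpow_abs_le hq0 hq1 (by omega)
          have h3 : (0:ℝ) < r ^ (-(k - m)) := zpow_pos hq0 _
          rw [show (k - m) = -(-(k - m)) by ring, zpow_neg]
          exact le_inv_of_le_inv₀ h3 (by rwa [inv_inv])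
        have h2 : ‖q ^ (k - m)‖ - 1 ≤ ‖q ^ (k - m) - 1‖ := by
          have := norm_sub_norm_le (q ^ (k - m)) (1 : ℂ)
          simpa using this
        refine (min_le_right _ _).trans (by linarith)
      · -- k - m ≥ 1 : |q^(k-m)| ≤ r
        have h1 : ‖q ^ (k - m)‖ ≤ r := by
          rw [norm_zpow]
          exact zpow_abs_le hq0 hq1 (by omega)
        have h2 : 1 - ‖q ^ (k - m)‖ ≤ ‖q ^ (k - m) - 1‖ := by
          have := norm_sub_norm_le (1 : ℂ) (q ^ (k - m))
          rw [norm_sub_rev] at this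
          simpa using this
        refine (min_le_left _ _).trans (by linarith)
    have hkey : δ ≤ ‖u - q ^ m‖ := by
      rw [hk, hfac, norm_mul, hδ]
      exact mul_le_mul_of_nonneg_left hlow habsm.le
    have : ε ≤ δ := min_le_left _ _
    linarith

lemma alg_cancel {u c b X D : ℂ} (hb : 1 - b ≠ 0) :
    u * (1 - b) * (c * (X / ((1 - b) * D))) = c * u * (X / D) := by
  rcases eq_or_ne D 0 with rfl | hD
  · simp
  · field_simp

end ResidueAux


set_option maxHeartbeats 1000000 in
open ResidueAux in
/-- u ↦ A(q,y,u⁻¹) has a simple pole at u = qᵐ with residue qᵐ yᵐ B(q,y). -/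
theorem residue_A_inv_at_qm (q y : ℂ) (hq0 : 0 < ‖q‖) (hq1 : ‖q‖ < 1)
    (hy : y ≠ 0) (hy' : ∀ k : ℤ, y ≠ q ^ k) (m : ℤ) :
    Filter.Tendsto (fun u : ℂ => (u - q ^ m) * A q y u⁻¹)
      (𝓝[≠] (q ^ m)) (𝓝 (q ^ m * y ^ m * B q y)) := by
  have hq : q ≠ 0 := by intro h; rw [h] at hq0; simp at hq0
  have hqm : (q : ℂ) ^ m ≠ 0 := zpow_ne_zero m hq
  have hPq : ∀ n : ℕ, (1 : ℂ) - q * q ^ n ≠ 0 := by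
    intro n
    apply term_ne_zero
    rw [norm_mul, norm_pow]
    nlinarith [pow_le_one₀ (norm_nonneg q) hq1.le (n := n), norm_nonneg q,
      pow_nonneg (norm_nonneg q) n]
  have hPqne : P1 q q ≠ 0 := P1_ne_zero hq1 hPq
  have hB : B q y = P1 q y * P1 q (q * y⁻¹) / (P1 q q * P1 q q) := by
    have h1 : HasProd (fun n : ℕ => 1 - y * q ^ n) (P1 q y) := (mult1 hq1 y).hasProd
    have h2 : HasProd (fun n : ℕ => 1 - q * y⁻¹ * q ^ n) (P1 q (q * y⁻¹)) :=
      (mult1 hq1 _).hasProd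
    have h3 : HasProd (fun n : ℕ => 1 - q * q ^ n) (P1 q q) := (mult1 hq1 q).hasProd
    have h5 := hasProd_div (h1.mul h2) (h3.mul h3) (mul_ne_zero hPqne hPqne)
    rw [B, ← h5.tprod_eq]
    refine tprod_congr fun n => ?_
    rw [pow_succ]
    ring_nf
  have hbase : Tendsto (fun u : ℂ => u) (𝓝[≠] (q ^ m : ℂ)) (𝓝 (q ^ m)) :=
    tendsto_id.mono_right nhdsWithin_le_nhds
  have hw : Tendsto (fun u : ℂ => q ^ m * u⁻¹) (𝓝[≠] (q ^ m : ℂ)) (𝓝 1) := by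
    have h1 : Tendsto (fun u : ℂ => q ^ m * u⁻¹) (𝓝[≠] (q ^ m : ℂ))
        (𝓝 (q ^ m * (q ^ m)⁻¹)) := tendsto_const_nhds.mul (hbase.inv₀ hqm)
    rwa [mul_inv_cancel₀ hqm] at h1
  have cP := contP1 (q := q) hq1
  have hin1 : Tendsto (fun u : ℂ => y * (q ^ m * u⁻¹)) (𝓝[≠] (q ^ m : ℂ)) (𝓝 y) := by
    have := hw.const_mul y; rwa [mul_one] at this
  have l1 : Tendsto (fun u : ℂ => P1 q (y * (q ^ m * u⁻¹))) (𝓝[≠] (q ^ m : ℂ))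
      (𝓝 (P1 q y)) := (cP y).tendsto.comp hin1
  have hin2 : Tendsto (fun u : ℂ => q * (y * (q ^ m * u⁻¹))⁻¹) (𝓝[≠] (q ^ m : ℂ))
      (𝓝 (q * y⁻¹)) := (hin1.inv₀ hy).const_mul q
  have l2 : Tendsto (fun u : ℂ => P1 q (q * (y * (q ^ m * u⁻¹))⁻¹)) (𝓝[≠] (q ^ m : ℂ))
      (𝓝 (P1 q (q * y⁻¹))) := (cP (q * y⁻¹)).tendsto.comp hin2
  have hin3 : Tendsto (fun u : ℂ => q * (q ^ m * u⁻¹)) (𝓝[≠] (q ^ m : ℂ)) (𝓝 q) := by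
    have := hw.const_mul q; rwa [mul_one] at this
  have l3 : Tendsto (fun u : ℂ => P1 q (q * (q ^ m * u⁻¹))) (𝓝[≠] (q ^ m : ℂ))
      (𝓝 (P1 q q)) := (cP q).tendsto.comp hin3
  have hin4 : Tendsto (fun u : ℂ => q * (q ^ m * u⁻¹)⁻¹) (𝓝[≠] (q ^ m : ℂ)) (𝓝 q) := by
    have := (hw.inv₀ one_ne_zero).const_mul q
    rwa [inv_one, mul_one] at this
  have l4 : Tendsto (fun u : ℂ => P1 q (q * (q ^ m * u⁻¹)⁻¹)) (𝓝[≠] (q ^ m : ℂ))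
      (𝓝 (P1 q q)) := (cP q).tendsto.comp hin4
  have lu : Tendsto (fun u : ℂ => y ^ m * u) (𝓝[≠] (q ^ m : ℂ)) (𝓝 (y ^ m * q ^ m)) :=
    hbase.const_mul _
  have hA : Tendsto (fun u : ℂ => y ^ m * u *
      (P1 q (y * (q ^ m * u⁻¹)) * P1 q (q * (y * (q ^ m * u⁻¹))⁻¹) /
        (P1 q (q * (q ^ m * u⁻¹)) * P1 q (q * (q ^ m * u⁻¹)⁻¹))))
      (𝓝[≠] (q ^ m : ℂ))
      (𝓝 (y ^ m * q ^ m * (P1 q y * P1 q (q * y⁻¹) / (P1 q q * P1 q q)))) :=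
    lu.mul ((l1.mul l2).div (l3.mul l4) (mul_ne_zero hPqne hPqne))
  have hval : q ^ m * y ^ m * B q y =
      y ^ m * q ^ m * (P1 q y * P1 q (q * y⁻¹) / (P1 q q * P1 q q)) := by
    rw [hB]; ring
  rw [hval]
  refine Filter.Tendsto.congr' ?_ hA
  filter_upwards [isolated hq0 hq1 m, self_mem_nhdsWithin] with u hu hne
  obtain ⟨hu0, huk⟩ := hu
  have hne' : u ≠ q ^ m := hne
  have hv0 : (u⁻¹ : ℂ) ≠ 0 := inv_ne_zero hu0
  -- w and its properties
  have hwne : ∀ j : ℤ, q ^ m * u⁻¹ ≠ q ^ j := by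
    intro j hj
    apply huk (m - j)
    have h1 : u = q ^ m * (q ^ j)⁻¹ := by
      rw [← hj]; field_simp
    rw [h1, zpow_sub₀ hq, div_eq_mul_inv]
  have hw0 : q ^ m * u⁻¹ ≠ 0 := mul_ne_zero hqm hv0
  have hw1 : (1 : ℂ) - q ^ m * u⁻¹ ≠ 0 := by
    rw [sub_ne_zero]
    intro h1
    exact hwne 0 (by rw [← h1, zpow_zero])
  -- denominators of A nonzero
  have hd1 : ∀ n : ℕ, (1 : ℂ) - u⁻¹ * q ^ n ≠ 0 := by
    intro n h
    apply huk (n : ℤ)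
    have h1 : u⁻¹ * q ^ n = 1 := by linear_combination -h
    have h2 : u = q ^ n := ((inv_mul_eq_one₀ hu0).mp h1)
    rw [h2, zpow_natCast]
  have hd2 : ∀ n : ℕ, (1 : ℂ) - q * (u⁻¹)⁻¹ * q ^ n ≠ 0 := by
    intro n h
    rw [inv_inv] at h
    apply huk (-(n + 1) : ℤ)
    have h1 : u * q ^ (n + 1) = 1 := by rw [pow_succ]; linear_combination -h
    have h2 : u = (q ^ (n + 1))⁻¹ := eq_inv_of_mul_eq_one_left h1
    have hexp : (-((n : ℤ) + 1)) = -(((n + 1 : ℕ)) : ℤ) := by push_cast; ring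
    rw [hexp, zpow_neg, zpow_natCast]
    exact h2
  -- nonvanishing of the two "denominator" P1's at u
  have hDa : ∀ n : ℕ, (1 : ℂ) - q * (q ^ m * u⁻¹) * q ^ n ≠ 0 := by
    intro n h
    apply hwne (-(n + 1) : ℤ)
    have h1 : (q ^ m * u⁻¹) * q ^ (n + 1) = 1 := by rw [pow_succ]; linear_combination -h
    have h2 : q ^ m * u⁻¹ = (q ^ (n + 1))⁻¹ := eq_inv_of_mul_eq_one_left h1
    have hexp : (-((n : ℤ) + 1)) = -(((n + 1 : ℕ)) : ℤ) := by push_cast; ring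
    rw [hexp, zpow_neg, zpow_natCast]
    exact h2
  have hDb : ∀ n : ℕ, (1 : ℂ) - q * (q ^ m * u⁻¹)⁻¹ * q ^ n ≠ 0 := by
    intro n h
    apply hwne ((n : ℤ) + 1)
    have h1 : (q ^ m * u⁻¹)⁻¹ * q ^ (n + 1) = 1 := by rw [pow_succ]; linear_combination -h
    have h2 : q ^ m * u⁻¹ = q ^ (n + 1) := by
      have h3 := (inv_mul_eq_one₀ hw0).mp h1
      exact h3
    have hexp : ((n : ℤ) + 1) = (((n + 1 : ℕ)) : ℤ) := by push_cast; ring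
    rw [hexp, zpow_natCast]
    exact h2
  have hD : P1 q (q * (q ^ m * u⁻¹)) * P1 q (q * (q ^ m * u⁻¹)⁻¹) ≠ 0 :=
    mul_ne_zero (P1_ne_zero hq1 (by intro n; have := hDa n; rwa [mul_assoc, ← mul_assoc] at this))
      (P1_ne_zero hq1 (by intro n; have := hDb n; rwa [mul_assoc, ← mul_assoc] at this))
  -- main pointwise identity
  have e1 : A q y u⁻¹ = GG q y u⁻¹ := A_eq hq1 y hd1 hd2
  have e2 : GG q y u⁻¹ = y ^ m * GG q y (q ^ m * u⁻¹) := by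
    have h := GG_iter hq1 hq hy (-m) (v := q ^ m * u⁻¹) hw0
    rw [show q ^ (-m) * (q ^ m * u⁻¹) = u⁻¹ by
      rw [← mul_assoc, ← zpow_add₀ hq]; simp] at h
    rw [h, neg_neg]
  have e3 : FF q (q ^ m * u⁻¹) = (1 - q ^ m * u⁻¹) *
      (P1 q (q * (q ^ m * u⁻¹)) * P1 q (q * (q ^ m * u⁻¹)⁻¹)) := by
    rw [FF, P1_factor hq1 (q ^ m * u⁻¹)]; ring
  have e4 : u - q ^ m = u * (1 - q ^ m * u⁻¹) := by
    rw [mul_sub, mul_one, show u * (q ^ m * u⁻¹) = q ^ m by field_simp]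
  rw [e1, e2, GG, e3, e4, FF]
  exact (alg_cancel hw1).symm
end

section
/- Let q ∈ ℂ with 0 < |q| < 1, let y ∈ ℂ be nonzero with y ∉ {q^k : k ∈ ℤ}, let v ∈ ℂ be nonzero with v ∉ {q^k : k ∈ ℤ}, and let m ∈ ℤ. Then lim_{u → v^{−1}q^m} (u − v^{−1}q^m) · A(q, y, uv) = −v^{−1} q^m y^{−m} B(q, y), and lim_{u → v^{−1}q^m} (u − v^{−1}q^m) · A(q, y, (uv)^{−1}) = v^{−1} q^m y^{m} B(q, y). -/
open Complex Filter Topology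

namespace ResA

/-- E q x = ∏ (1 - x qⁿ). -/
noncomputable def E (q x : ℂ) : ℂ := ∏' n : ℕ, (1 - x * q ^ n)

variable {q : ℂ}

lemma summable_geo (hq1 : ‖q‖ < 1) (C : ℝ) : Summable fun n : ℕ => C * ‖q‖ ^ n :=
  (summable_geometric_of_lt_one (norm_nonneg q) hq1).mul_left C

lemma summable_log (hq1 : ‖q‖ < 1) {x : ℂ} (hx : ∀ n : ℕ, 1 - x * q ^ n ≠ 0) :
    Summable fun n : ℕ => Complex.log (1 - x * q ^ n) := by
  obtain ⟨N, hN⟩ : ∃ N : ℕ, ‖x‖ * ‖q‖ ^ N ≤ 1 / 2 := by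
    rcases eq_or_ne x 0 with rfl | hx0
    · exact ⟨0, by norm_num⟩
    · have h := (tendsto_pow_atTop_nhds_zero_of_lt_one (norm_nonneg q) hq1).const_mul ‖x‖
      simp only [mul_zero] at h
      exact ((h.eventually_le_const (by norm_num : (0:ℝ) < 1/2)).exists)
  rw [← summable_nat_add_iff N]
  have key : ∀ n : ℕ, ‖Complex.log (1 - x * q ^ (n + N))‖ ≤ (3 / 2 * (1 / 2)) * ‖q‖ ^ n := by
    intro n
    have hb : ‖-(x * q ^ (n + N))‖ ≤ 1 / 2 * ‖q‖ ^ n := by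
      rw [norm_neg, norm_mul, norm_pow, pow_add, mul_comm (‖q‖^n)]
      calc ‖x‖ * (‖q‖ ^ N * ‖q‖ ^ n) = (‖x‖ * ‖q‖ ^ N) * ‖q‖ ^ n := by ring
        _ ≤ 1 / 2 * ‖q‖ ^ n := by
            exact mul_le_mul_of_nonneg_right hN (by positivity)
    have hb2 : ‖-(x * q ^ (n + N))‖ ≤ 1 / 2 := by
      refine hb.trans ?_
      have : ‖q‖ ^ n ≤ 1 := pow_le_one₀ (norm_nonneg q) hq1.le
      nlinarith
    have := Complex.norm_log_one_add_half_le_self hb2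
    rw [show (1 : ℂ) + -(x * q ^ (n + N)) = 1 - x * q ^ (n + N) by ring] at this
    refine this.trans ?_
    calc 3 / 2 * ‖-(x * q ^ (n + N))‖ ≤ 3 / 2 * (1 / 2 * ‖q‖ ^ n) := by
          exact mul_le_mul_of_nonneg_left hb (by norm_num)
      _ = 3 / 2 * (1 / 2) * ‖q‖ ^ n := by ring
  exact Summable.of_norm_bounded (g := fun n : ℕ => 3 / 2 * (1 / 2) * ‖q‖ ^ n)
    (summable_geo hq1 _) key

lemma mult_E (hq1 : ‖q‖ < 1) (x : ℂ) : Multipliable fun n : ℕ => 1 - x * q ^ n := by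
  by_cases hx : ∀ n : ℕ, 1 - x * q ^ n ≠ 0
  · exact Complex.multipliable_of_summable_log (summable_log hq1 hx)
  · push_neg at hx
    obtain ⟨n₀, hn₀⟩ := hx
    refine ⟨0, ?_⟩
    have : ∀ᶠ s : Finset ℕ in atTop, (∏ n ∈ s, (1 - x * q ^ n)) = 0 := by
      filter_upwards [Filter.eventually_ge_atTop {n₀}] with s hs
      exact Finset.prod_eq_zero (hs (Finset.mem_singleton_self n₀)) hn₀
    refine Tendsto.congr' ?_ (tendsto_const_nhds (x := (0 : ℂ)))
    filter_upwards [this] with s hs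
    exact hs.symm

lemma hasProd_E (hq1 : ‖q‖ < 1) (x : ℂ) :
    HasProd (fun n : ℕ => 1 - x * q ^ n) (E q x) := (mult_E hq1 x).hasProd

lemma E_eq_exp (hq1 : ‖q‖ < 1) {x : ℂ} (hx : ∀ n : ℕ, 1 - x * q ^ n ≠ 0) :
    E q x = Complex.exp (∑' n : ℕ, Complex.log (1 - x * q ^ n)) := by
  have := Complex.cexp_tsum_eq_tprod (f := fun n : ℕ => 1 - x * q ^ n) hx (summable_log hq1 hx)
  exact this.symm

lemma E_ne_zero (hq1 : ‖q‖ < 1) {x : ℂ} (hx : ∀ n : ℕ, 1 - x * q ^ n ≠ 0) :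
    E q x ≠ 0 := by
  rw [E_eq_exp hq1 hx]; exact Complex.exp_ne_zero _

lemma E_shift (hq1 : ‖q‖ < 1) (x : ℂ) : E q x = (1 - x) * E q (q * x) := by
  have h := hasProd_E hq1 (q * x)
  have h' : HasProd (fun n : ℕ => 1 - x * q ^ (n + 1)) (E q (q * x)) := by
    have : (fun n : ℕ => 1 - x * q ^ (n + 1)) = fun n : ℕ => 1 - q * x * q ^ n := by
      funext n; rw [pow_succ]; ring
    rw [this]; exact h
  have h2 := HasProd.zero_mul (f := fun n : ℕ => 1 - x * q ^ n) h'
  calc E q x = (1 - x * q ^ 0) * E q (q * x) := h2.tprod_eq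
    _ = (1 - x) * E q (q * x) := by rw [pow_zero, mul_one]


lemma one_sub_ne {z : ℂ} (h : ‖z‖ < 1) : 1 - z ≠ 0 := by
  intro h0
  have : z = 1 := by linear_combination -h0
  rw [this] at h; simp at h

lemma E_split (hq1 : ‖q‖ < 1) (N : ℕ) (x : ℂ) :
    E q x = (∏ n ∈ Finset.range N, (1 - x * q ^ n)) * E q (q ^ N * x) := by
  induction N with
  | zero => simp
  | succ N ih =>
      rw [ih, E_shift hq1 (q ^ N * x), Finset.prod_range_succ,
        show q * (q ^ N * x) = q ^ (N + 1) * x by ring]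
      ring

lemma contE_ball (hq1 : ‖q‖ < 1) : ContinuousOn (E q) (Metric.ball (0 : ℂ) (1 / 2)) := by
  have hsmall : ∀ z ∈ Metric.ball (0 : ℂ) (1 / 2), ∀ n : ℕ, ‖z * q ^ n‖ ≤ 1 / 2 := by
    intro z hz n
    rw [Metric.mem_ball, dist_zero_right] at hz
    rw [norm_mul, norm_pow]
    calc ‖z‖ * ‖q‖ ^ n ≤ ‖z‖ * 1 := by
          exact mul_le_mul_of_nonneg_left (pow_le_one₀ (norm_nonneg q) hq1.le) (norm_nonneg z)
      _ ≤ 1 / 2 := by rw [mul_one]; exact hz.le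
  have hne : ∀ z ∈ Metric.ball (0 : ℂ) (1 / 2), ∀ n : ℕ, 1 - z * q ^ n ≠ 0 := by
    intro z hz n
    exact one_sub_ne (lt_of_le_of_lt (hsmall z hz n) (by norm_num))
  have htsum : ContinuousOn (fun z : ℂ => ∑' n : ℕ, Complex.log (1 - z * q ^ n))
      (Metric.ball (0 : ℂ) (1 / 2)) := by
    refine continuousOn_tsum (u := fun n : ℕ => 3 / 2 * (1 / 2) * ‖q‖ ^ n) ?_
      (summable_geo hq1 _) ?_
    · intro n
      refine ContinuousOn.clog (Continuous.continuousOn (by continuity)) ?_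
      intro z hz
      rw [Complex.mem_slitPlane_iff]
      left
      have : ‖z * q ^ n‖ ≤ 1 / 2 := hsmall z hz n
      have hre : (z * q ^ n).re ≤ 1 / 2 :=
        le_trans (Complex.re_le_norm _) (by exact this)
      simp only [Complex.sub_re, Complex.one_re]
      linarith
    · intro n z hz
      have hb : ‖-(z * q ^ n)‖ ≤ 1 / 2 := by rw [norm_neg]; exact hsmall z hz n
      have := Complex.norm_log_one_add_half_le_self hb
      rw [show (1 : ℂ) + -(z * q ^ n) = 1 - z * q ^ n by ring] at this
      refine this.trans ?_
      rw [norm_neg, norm_mul, norm_pow]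
      have hz' : ‖z‖ ≤ 1 / 2 := by
        rw [Metric.mem_ball, dist_zero_right] at hz; exact hz.le
      have : ‖z‖ * ‖q‖ ^ n ≤ 1 / 2 * ‖q‖ ^ n :=
        mul_le_mul_of_nonneg_right hz' (by positivity)
      nlinarith
  refine ContinuousOn.congr (Continuous.comp_continuousOn Complex.continuous_exp htsum) ?_
  intro z hz
  exact E_eq_exp hq1 (hne z hz)

lemma contE_at (hq1 : ‖q‖ < 1) (x₀ : ℂ) : ContinuousAt (E q) x₀ := by
  obtain ⟨N, hN⟩ : ∃ N : ℕ, (‖x₀‖ + 1) * ‖q‖ ^ N < 1 / 2 := by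
    have h := (tendsto_pow_atTop_nhds_zero_of_lt_one (norm_nonneg q) hq1).const_mul (‖x₀‖ + 1)
    simp only [mul_zero] at h
    exact (h.eventually_lt_const (by norm_num : (0:ℝ) < 1/2)).exists
  have hmem : ∀ x : ℂ, ‖x‖ ≤ ‖x₀‖ + 1 → q ^ N * x ∈ Metric.ball (0 : ℂ) (1 / 2) := by
    intro x hx
    rw [Metric.mem_ball, dist_zero_right, norm_mul, norm_pow]
    calc ‖q‖ ^ N * ‖x‖ ≤ ‖q‖ ^ N * (‖x₀‖ + 1) :=
          mul_le_mul_of_nonneg_left hx (by positivity)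
      _ = (‖x₀‖ + 1) * ‖q‖ ^ N := by ring
      _ < 1 / 2 := hN
  have key : ContinuousAt (fun x : ℂ => E q (q ^ N * x)) x₀ := by
    have hc : ContinuousAt (E q) (q ^ N * x₀) :=
      (contE_ball hq1).continuousAt
        (Metric.isOpen_ball.mem_nhds (hmem x₀ (by linarith)))
    exact hc.comp ((continuous_const.mul continuous_id).continuousAt)
  have heq : E q = fun x : ℂ => (∏ n ∈ Finset.range N, (1 - x * q ^ n)) * E q (q ^ N * x) := by
    funext x; exact E_split hq1 N x
  rw [heq]
  exact ContinuousAt.mul ((continuous_finset_prod (Finset.range N) fun n _ =>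
    (continuous_const.sub (continuous_id.mul continuous_const))).continuousAt) key

lemma hasProd_div₀ {f g : ℕ → ℂ} {a b : ℂ} (hf : HasProd f a) (hg : HasProd g b)
    (hb : b ≠ 0) : HasProd (fun n => f n / g n) (a / b) := by
  refine Filter.Tendsto.congr (fun s => ?_) (Filter.Tendsto.div hf hg hb)
  exact (Finset.prod_div_distrib _ _).symm


lemma factors_ne (hq0 : q ≠ 0) {x : ℂ} (hx : ∀ k : ℤ, x ≠ q ^ k) :
    ∀ n : ℕ, 1 - x * q ^ n ≠ 0 := by
  intro n h
  apply hx (-(n : ℤ))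
  have hqn : (q : ℂ) ^ (n : ℕ) ≠ 0 := pow_ne_zero n hq0
  have hx1 : x * q ^ n = 1 := by linear_combination -h
  rw [zpow_neg, zpow_natCast]
  field_simp
  linear_combination hx1

lemma factors_ne' (hq0 : q ≠ 0) {x : ℂ} (hx : ∀ k : ℤ, x ≠ q ^ k) :
    ∀ n : ℕ, 1 - q * x⁻¹ * q ^ n ≠ 0 := by
  intro n h
  have hx1 : q * x⁻¹ * q ^ n = 1 := by linear_combination -h
  have hx0 : x ≠ 0 := by
    intro h0; rw [h0] at hx1; simp at hx1
  apply hx ((n : ℤ) + 1)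
  have : x = q * q ^ n := by
    field_simp at hx1
    linear_combination -hx1
  rw [this, zpow_add₀ hq0, zpow_natCast, zpow_one]; ring

lemma shift_cond (hq0 : q ≠ 0) {x : ℂ} (hx : ∀ k : ℤ, x ≠ q ^ k) (j : ℤ) :
    ∀ k : ℤ, q ^ j * x ≠ q ^ k := by
  intro k h
  apply hx (k - j)
  have hj : (q : ℂ) ^ j ≠ 0 := zpow_ne_zero j hq0
  calc x = (q ^ j)⁻¹ * (q ^ j * x) := by field_simp
    _ = (q ^ j)⁻¹ * q ^ k := by rw [h]
    _ = q ^ (k - j) := by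
        rw [← zpow_neg, ← zpow_add₀ hq0]; ring_nf

lemma A_eq (hq1 : ‖q‖ < 1) (y w : ℂ) (h3 : E q w ≠ 0) (h4 : E q (q * w⁻¹) ≠ 0) :
    A q y w = E q (y * w) * E q (q * (y * w)⁻¹) / (E q w * E q (q * w⁻¹)) := by
  have h1 := hasProd_E hq1 (y * w)
  have h2 : HasProd (fun n : ℕ => 1 - (y * w)⁻¹ * q ^ (n + 1)) (E q (q * (y * w)⁻¹)) := by
    have h := hasProd_E hq1 (q * (y * w)⁻¹)
    have e : (fun n : ℕ => 1 - (y * w)⁻¹ * q ^ (n + 1))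
        = fun n : ℕ => 1 - q * (y * w)⁻¹ * q ^ n := by
      funext n; rw [pow_succ]; ring
    rw [e]; exact h
  have h3' := hasProd_E hq1 w
  have h4' : HasProd (fun n : ℕ => 1 - w⁻¹ * q ^ (n + 1)) (E q (q * w⁻¹)) := by
    have h := hasProd_E hq1 (q * w⁻¹)
    have e : (fun n : ℕ => 1 - w⁻¹ * q ^ (n + 1)) = fun n : ℕ => 1 - q * w⁻¹ * q ^ n := by
      funext n; rw [pow_succ]; ring
    rw [e]; exact h
  exact (hasProd_div₀ (h1.mul h2) (h3'.mul h4') (mul_ne_zero h3 h4)).tprod_eq.symm.symm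

lemma B_eq (hq0 : q ≠ 0) (hq1 : ‖q‖ < 1) (y : ℂ) :
    B q y = E q y * E q (q * y⁻¹) / (E q q) ^ 2 := by
  have h1 := hasProd_E hq1 y
  have h2 : HasProd (fun n : ℕ => 1 - y⁻¹ * q ^ (n + 1)) (E q (q * y⁻¹)) := by
    have h := hasProd_E hq1 (q * y⁻¹)
    have e : (fun n : ℕ => 1 - y⁻¹ * q ^ (n + 1)) = fun n : ℕ => 1 - q * y⁻¹ * q ^ n := by
      funext n; rw [pow_succ]; ring
    rw [e]; exact h
  have h3 : HasProd (fun n : ℕ => 1 - q ^ (n + 1)) (E q q) := by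
    have h := hasProd_E hq1 q
    have e : (fun n : ℕ => 1 - q ^ (n + 1)) = fun n : ℕ => 1 - q * q ^ n := by
      funext n; rw [pow_succ]; ring
    rw [e]; exact h
  have hEq : (E q q) ≠ 0 := by
    refine E_ne_zero hq1 ?_
    intro n
    refine one_sub_ne ?_
    rw [norm_mul, norm_pow]
    calc ‖q‖ * ‖q‖ ^ n ≤ ‖q‖ * 1 :=
          mul_le_mul_of_nonneg_left (pow_le_one₀ (norm_nonneg q) hq1.le) (norm_nonneg q)
      _ < 1 := by rw [mul_one]; exact hq1
  have h33 : HasProd (fun n : ℕ => (1 - q ^ (n + 1)) ^ 2) ((E q q) ^ 2) := by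
    have e : (fun n : ℕ => (1 - q ^ (n + 1)) ^ 2)
        = fun n : ℕ => (1 - q ^ (n + 1)) * (1 - q ^ (n + 1)) := by
      funext n; rw [sq]
    rw [e, sq]
    exact h3.mul h3
  exact (hasProd_div₀ (h1.mul h2) h33 (pow_ne_zero 2 hEq)).tprod_eq.symm.symm

lemma E_q_ne (hq1 : ‖q‖ < 1) : E q q ≠ 0 := by
  refine E_ne_zero hq1 ?_
  intro n
  refine one_sub_ne ?_
  rw [norm_mul, norm_pow]
  calc ‖q‖ * ‖q‖ ^ n ≤ ‖q‖ * 1 :=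
        mul_le_mul_of_nonneg_left (pow_le_one₀ (norm_nonneg q) hq1.le) (norm_nonneg q)
    _ < 1 := by rw [mul_one]; exact hq1

lemma A_step (hq0 : q ≠ 0) (hq1 : ‖q‖ < 1) {y w : ℂ} (hy : y ≠ 0) (hw0 : w ≠ 0)
    (hw : ∀ k : ℤ, w ≠ q ^ k) (hyw : ∀ k : ℤ, y * w ≠ q ^ k) :
    A q y (q * w) = y⁻¹ * A q y w := by
  have hw1 : w ≠ 1 := by simpa using hw 0
  have hyw1 : y * w ≠ 1 := by simpa using hyw 0
  have h1w : (1 : ℂ) - w ≠ 0 := sub_ne_zero.mpr (fun h => hw1 h.symm)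
  have h1yw : (1 : ℂ) - y * w ≠ 0 := sub_ne_zero.mpr (fun h => hyw1 h.symm)
  have h1wi : (1 : ℂ) - w⁻¹ ≠ 0 := by
    rw [sub_ne_zero]
    intro h
    exact hw1 (by rw [← inv_inv w, ← h]; simp)
  have hEw : E q w ≠ 0 := E_ne_zero hq1 (factors_ne hq0 hw)
  have hEw' : E q (q * w⁻¹) ≠ 0 := E_ne_zero hq1 (factors_ne' hq0 hw)
  have hEqw : E q (q * w) ≠ 0 := by
    intro h
    apply hEw
    rw [E_shift hq1 w, h, mul_zero]
  have hEwi : E q w⁻¹ ≠ 0 := by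
    rw [E_shift hq1 w⁻¹]
    exact mul_ne_zero h1wi hEw'
  have e1 : q * (q * w)⁻¹ = w⁻¹ := by field_simp
  have e2 : y * (q * w) = q * (y * w) := by ring
  have e3 : q * (q * (y * w))⁻¹ = (y * w)⁻¹ := by field_simp
  have hL := A_eq hq1 y (q * w) hEqw (by rw [e1]; exact hEwi)
  rw [e1, e2, e3] at hL
  have hR := A_eq hq1 y w hEw hEw'
  have eq1 : E q (q * (y * w)) = E q (y * w) / (1 - y * w) := by
    rw [E_shift hq1 (y * w)]; field_simp
  have eq2 : E q ((y * w)⁻¹) = (1 - (y * w)⁻¹) * E q (q * (y * w)⁻¹) := E_shift hq1 _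
  have eq3 : E q (q * w) = E q w / (1 - w) := by
    rw [E_shift hq1 w]; field_simp
  have eq4 : E q (w⁻¹) = (1 - w⁻¹) * E q (q * w⁻¹) := E_shift hq1 _
  rw [eq1, eq2, eq3, eq4] at hL
  have k1 : (1 - (y * w)⁻¹) = -(y * w)⁻¹ * (1 - y * w) := by
    field_simp
    ring
  have k2 : (1 - w⁻¹) = -w⁻¹ * (1 - w) := by
    field_simp
    ring
  rw [hL, hR, k1, k2]
  rw [show E q (y * w) / (1 - y * w) * (-(y * w)⁻¹ * (1 - y * w) * E q (q * (y * w)⁻¹))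
      = -(y * w)⁻¹ * (E q (y * w) * E q (q * (y * w)⁻¹)) from by
    field_simp]
  rw [show E q w / (1 - w) * (-w⁻¹ * (1 - w) * E q (q * w⁻¹))
      = -w⁻¹ * (E q w * E q (q * w⁻¹)) from by
    field_simp]
  rw [mul_div_mul_comm, show -(y * w)⁻¹ / -w⁻¹ = y⁻¹ from by
    rw [neg_div_neg_eq, div_eq_iff (inv_ne_zero hw0), mul_inv]]

lemma A_shift (hq0 : q ≠ 0) (hq1 : ‖q‖ < 1) {y w : ℂ} (hy : y ≠ 0) (hw0 : w ≠ 0)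
    (hw : ∀ k : ℤ, w ≠ q ^ k) (hyw : ∀ k : ℤ, y * w ≠ q ^ k) (m : ℤ) :
    A q y (q ^ m * w) = y ^ (-m) * A q y w := by
  induction m using Int.induction_on with
  | zero => simp
  | succ k ih =>
      have e : (q : ℂ) ^ ((k : ℤ) + 1) * w = q * (q ^ (k : ℤ) * w) := by
        rw [zpow_add_one₀ hq0]; ring
      have hstep := A_step hq0 hq1 hy (mul_ne_zero (zpow_ne_zero _ hq0) hw0)
        (shift_cond hq0 hw k)
        (by
          intro j
          have h' := shift_cond hq0 hyw k j
          intro h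
          exact h' (by rw [← h]; ring))
      calc A q y (q ^ ((k : ℤ) + 1) * w) = y⁻¹ * A q y (q ^ (k : ℤ) * w) := by
            rw [e, hstep]
        _ = y⁻¹ * (y ^ (-(k : ℤ)) * A q y w) := by rw [ih]
        _ = y ^ (-1 : ℤ) * y ^ (-(k : ℤ)) * A q y w := by rw [zpow_neg_one]; ring
        _ = y ^ (-((k : ℤ) + 1)) * A q y w := by
            rw [← zpow_add₀ hy, show (-1 + -(k : ℤ)) = -((k : ℤ) + 1) by ring]
  | pred k ih =>
      have e : q * ((q : ℂ) ^ (-(k : ℤ) - 1) * w) = q ^ (-(k : ℤ)) * w := by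
        rw [show -(k : ℤ) = (-(k : ℤ) - 1) + 1 by ring, zpow_add_one₀ hq0]
        ring
      have hstep := A_step hq0 hq1 hy
        (mul_ne_zero (zpow_ne_zero _ hq0) hw0)
        (shift_cond hq0 hw (-(k : ℤ) - 1))
        (by
          intro j
          have h' := shift_cond hq0 hyw (-(k : ℤ) - 1) j
          intro h
          exact h' (by rw [← h]; ring))
      rw [e, ih] at hstep
      calc A q y (q ^ (-(k : ℤ) - 1) * w)
          = y * (y⁻¹ * A q y (q ^ (-(k : ℤ) - 1) * w)) := by
            rw [← mul_assoc, mul_inv_cancel₀ hy, one_mul]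
        _ = y * (y ^ (-(-(k : ℤ))) * A q y w) := by rw [← hstep]
        _ = y ^ (1 : ℤ) * y ^ (-(-(k : ℤ))) * A q y w := by rw [zpow_one]; ring
        _ = y ^ (-(-(k : ℤ) - 1)) * A q y w := by
            rw [← zpow_add₀ hy, show (1 + -(-(k : ℤ))) = -(-(k : ℤ) - 1) by ring]

lemma avoid (hq0 : q ≠ 0) (hq1 : ‖q‖ < 1) {c z₀ : ℂ} (hc : c ≠ 0) (hz₀ : z₀ ≠ 0) :
    ∀ᶠ z in 𝓝 z₀, ∀ k : ℤ, z = c * q ^ k → z₀ = c * q ^ k := by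
  set a := ‖z₀‖ with ha_def
  have ha : 0 < a := norm_pos_iff.mpr hz₀
  set r := ‖q‖ with hr_def
  have hr0 : 0 < r := norm_pos_iff.mpr hq0
  have hr1 : r < 1 := hq1
  have hc0 : 0 < ‖c‖ := norm_pos_iff.mpr hc
  have hlogr : Real.log r < 0 := Real.log_neg hr0 hr1
  set K : Set ℤ := {k : ℤ | a / 2 ≤ ‖c‖ * r ^ k ∧ ‖c‖ * r ^ k ≤ 2 * a} with hK_def
  have hKfin : K.Finite := by
    refine Set.Finite.subset (Set.finite_Icc (⌈Real.log (2 * a / ‖c‖) / Real.log r⌉)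
      (⌊Real.log (a / (2 * ‖c‖)) / Real.log r⌋)) ?_
    rintro k ⟨h1, h2⟩
    have hrk : (0:ℝ) < r ^ k := zpow_pos hr0 k
    constructor
    · rw [Int.ceil_le, div_le_iff_of_neg hlogr]
      calc (k : ℝ) * Real.log r = Real.log (r ^ k) := (Real.log_zpow r k).symm
        _ ≤ Real.log (2 * a / ‖c‖) := by
            apply Real.log_le_log hrk
            rw [le_div_iff₀ hc0]; linarith
    · rw [Int.le_floor, le_div_iff_of_neg hlogr]
      calc Real.log (a / (2 * ‖c‖)) ≤ Real.log (r ^ k) := by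
            apply Real.log_le_log (by positivity)
            rw [div_le_iff₀ (by positivity : (0:ℝ) < 2 * ‖c‖)]
            linarith
        _ = (k : ℝ) * Real.log r := Real.log_zpow r k
  classical
  set D : Finset ℝ := insert (a / 2)
    (hKfin.toFinset.image fun k => if c * q ^ k = z₀ then a / 2 else ‖z₀ - c * q ^ k‖) with hD
  have hDne : D.Nonempty := Finset.insert_nonempty _ _
  set ε := D.min' hDne with he
  have hε : 0 < ε := by
    rw [he]
    rw [Finset.lt_min'_iff]
    intro b hb
    rw [hD] at hb
    rcases Finset.mem_insert.mp hb with rfl | hb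
    · positivity
    · obtain ⟨k, hk, rfl⟩ := Finset.mem_image.mp hb
      split_ifs with h
      · positivity
      · rw [norm_pos_iff, sub_ne_zero]
        intro h'
        exact h h'.symm
  have hεa : ε ≤ a / 2 := Finset.min'_le _ _ (Finset.mem_insert_self _ _)
  rw [Metric.eventually_nhds_iff]
  refine ⟨ε, hε, ?_⟩
  intro z hz k hzk
  by_contra hne
  have hdist : ‖z - z₀‖ < ε := by rwa [dist_eq_norm] at hz
  have hnormz : ‖z‖ = ‖c‖ * r ^ k := by
    rw [hzk, norm_mul, norm_zpow]
  by_cases hkK : k ∈ K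
  · have hmem : ‖z₀ - c * q ^ k‖ ∈ D := by
      rw [hD]
      refine Finset.mem_insert_of_mem (Finset.mem_image.mpr ⟨k, hKfin.mem_toFinset.mpr hkK, ?_⟩)
      rw [if_neg (fun h => hne h.symm)]
    have h1 : ε ≤ ‖z₀ - c * q ^ k‖ := Finset.min'_le _ _ hmem
    rw [← hzk] at h1
    rw [show z₀ - z = -(z - z₀) by ring, norm_neg] at h1
    linarith
  · rw [hK_def, Set.mem_setOf_eq, not_and_or, not_le, not_le] at hkK
    have h1 : ‖z₀‖ - ‖z‖ ≤ ‖z₀ - z‖ := norm_sub_norm_le z₀ z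
    have h2 : ‖z‖ - ‖z₀‖ ≤ ‖z - z₀‖ := norm_sub_norm_le z z₀
    rw [norm_sub_rev] at h1
    rcases hkK with h | h
    · rw [← hnormz] at h
      linarith
    · rw [← hnormz] at h
      linarith

lemma qpow_inj (hq0 : q ≠ 0) (hq1 : ‖q‖ < 1) {k m : ℤ} (h : (q:ℂ) ^ k = q ^ m) : k = m := by
  have hr0 : 0 < ‖q‖ := norm_pos_iff.mpr hq0
  have : ‖q‖ ^ k = ‖q‖ ^ m := by rw [← norm_zpow, ← norm_zpow, h]
  exact zpow_right_injective₀ hr0 (ne_of_lt hq1) this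

lemma eventually_good (hq0 : q ≠ 0) (hq1 : ‖q‖ < 1) {y : ℂ} (hy : y ≠ 0)
    (hy' : ∀ k : ℤ, y ≠ q ^ k) (m : ℤ) :
    ∀ᶠ w in 𝓝[≠] ((q:ℂ) ^ m),
      w ≠ 0 ∧ (∀ k : ℤ, w ≠ q ^ k) ∧ (∀ k : ℤ, y * w ≠ q ^ k) := by
  have hqm : (q:ℂ) ^ m ≠ 0 := zpow_ne_zero m hq0
  have h0 : ∀ᶠ w in 𝓝 ((q:ℂ) ^ m), w ≠ 0 := eventually_ne_nhds hqm
  have h1 := avoid hq0 hq1 (one_ne_zero : (1:ℂ) ≠ 0) hqm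
  have h2 := avoid hq0 hq1 (inv_ne_zero hy) hqm
  filter_upwards [nhdsWithin_le_nhds h0, nhdsWithin_le_nhds h1, nhdsWithin_le_nhds h2,
    self_mem_nhdsWithin] with w hw0 hw1 hw2 hwne
  have hwne' : w ≠ (q:ℂ) ^ m := hwne
  refine ⟨hw0, ?_, ?_⟩
  · intro k hk
    have h := hw1 k (by rw [one_mul]; exact hk)
    rw [one_mul] at h
    have hkm : m = k := qpow_inj hq0 hq1 h
    exact hwne' (by rw [hk, ← hkm])
  · intro k hk
    have hww : w = y⁻¹ * q ^ k := by
      rw [← hk]; field_simp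
    have h := hw2 k hww
    apply hy' (k - m)
    have hy2 : y = q ^ k * ((q:ℂ) ^ m)⁻¹ := by
      field_simp [hy] at h
      calc y = ((q:ℂ) ^ m * ((q:ℂ) ^ m)⁻¹) * y := by rw [mul_inv_cancel₀ hqm, one_mul]
        _ = q ^ k * ((q:ℂ) ^ m)⁻¹ := by rw [← h]; ring
    rw [hy2, ← zpow_neg, ← zpow_add₀ hq0]
    ring_nf

lemma cancel_helper {s N D : ℂ} (hs : 1 - s ≠ 0) (hD : D ≠ 0) :
    (s - 1) * (N / ((1 - s) * D)) = -N / D := by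
  field_simp
  ring

lemma tendsto_L1 (hq0 : q ≠ 0) (hq1 : ‖q‖ < 1) {y : ℂ} (hy : y ≠ 0)
    (hy' : ∀ k : ℤ, y ≠ q ^ k) :
    Tendsto (fun s : ℂ => (s - 1) * A q y s) (𝓝[≠] (1:ℂ)) (𝓝 (-B q y)) := by
  have hEq : E q q ≠ 0 := E_q_ne hq1
  have key : Tendsto (fun s : ℂ => -(E q (y * s) * E q (q * (y * s)⁻¹))
      / (E q (q * s) * E q (q * s⁻¹))) (𝓝 (1:ℂ)) (𝓝 (-B q y)) := by
    have cy : ContinuousAt (fun s : ℂ => E q (y * s)) 1 := by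
      exact (contE_at hq1 (y * 1)).comp (continuousAt_const.mul continuousAt_id)
    have cinv : ContinuousAt (fun s : ℂ => E q (q * (y * s)⁻¹)) 1 := by
      have hin : ContinuousAt (fun s : ℂ => q * (y * s)⁻¹) 1 :=
        continuousAt_const.mul
          ((continuousAt_const.mul continuousAt_id).inv₀ (by simpa using hy))
      exact ContinuousAt.comp (g := E q) (f := fun s : ℂ => q * (y * s)⁻¹) (x := 1)
        (contE_at hq1 _) hin
    have cq : ContinuousAt (fun s : ℂ => E q (q * s)) 1 := by
      exact (contE_at hq1 (q * 1)).comp (continuousAt_const.mul continuousAt_id)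
    have cqi : ContinuousAt (fun s : ℂ => E q (q * s⁻¹)) 1 := by
      have hin : ContinuousAt (fun s : ℂ => q * s⁻¹) 1 :=
        continuousAt_const.mul (continuousAt_id.inv₀ one_ne_zero)
      exact ContinuousAt.comp (g := E q) (f := fun s : ℂ => q * s⁻¹) (x := 1)
        (contE_at hq1 _) hin
    have hc : ContinuousAt (fun s : ℂ => -(E q (y * s) * E q (q * (y * s)⁻¹))
        / (E q (q * s) * E q (q * s⁻¹))) 1 := by
      refine ContinuousAt.div ((cy.mul cinv).neg) (cq.mul cqi) ?_
      simpa using mul_ne_zero hEq hEq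
    have := hc.tendsto
    have hval : -(E q (y * 1) * E q (q * (y * 1)⁻¹)) / (E q (q * 1) * E q (q * (1:ℂ)⁻¹))
        = -B q y := by
      rw [mul_one, inv_one, mul_one, B_eq hq0 hq1 y, sq]
      ring
    rwa [hval] at this
  refine Tendsto.congr' ?_ (key.mono_left nhdsWithin_le_nhds)
  have h1 := avoid hq0 hq1 (one_ne_zero : (1:ℂ) ≠ 0) (one_ne_zero : (1:ℂ) ≠ 0)
  filter_upwards [nhdsWithin_le_nhds h1, nhdsWithin_le_nhds (eventually_ne_nhds
    (one_ne_zero : (1:ℂ) ≠ 0)), self_mem_nhdsWithin] with s hs1 hs0 hsne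
  have hsne' : s ≠ 1 := hsne
  have hs1' : ∀ k : ℤ, s ≠ q ^ k := by
    intro k hk
    have h := hs1 k (by rw [one_mul]; exact hk)
    rw [one_mul] at h
    have h0k : (0:ℤ) = k := qpow_inj hq0 hq1 (by rw [zpow_zero]; exact h)
    exact hsne' (by rw [hk, ← h0k, zpow_zero])
  have hEs : E q s ≠ 0 := E_ne_zero hq1 (factors_ne hq0 hs1')
  have hEs' : E q (q * s⁻¹) ≠ 0 := E_ne_zero hq1 (factors_ne' hq0 hs1')
  have hEqs : E q (q * s) ≠ 0 := fun h => hEs (by rw [E_shift hq1 s, h, mul_zero])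
  have h1s : (1:ℂ) - s ≠ 0 := sub_ne_zero.mpr (fun h => hsne' h.symm)
  have hD : E q (q * s) * E q (q * s⁻¹) ≠ 0 := mul_ne_zero hEqs hEs'
  rw [A_eq hq1 y s hEs hEs', E_shift hq1 s, mul_assoc,
    cancel_helper h1s hD, neg_div]

lemma tendsto_Lm (hq0 : q ≠ 0) (hq1 : ‖q‖ < 1) {y : ℂ} (hy : y ≠ 0)
    (hy' : ∀ k : ℤ, y ≠ q ^ k) (m : ℤ) :
    Tendsto (fun w : ℂ => (w - q ^ m) * A q y w) (𝓝[≠] ((q:ℂ) ^ m))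
      (𝓝 (-((q:ℂ) ^ m) * y ^ (-m) * B q y)) := by
  have hqm : (q:ℂ) ^ m ≠ 0 := zpow_ne_zero m hq0
  have hqq : (q:ℂ) ^ m * q ^ (-m) = 1 := by
    rw [← zpow_add₀ hq0]; simp
  have hmap : Tendsto (fun w : ℂ => q ^ (-m) * w) (𝓝[≠] ((q:ℂ) ^ m)) (𝓝[≠] (1:ℂ)) := by
    apply tendsto_nhdsWithin_of_tendsto_nhds_of_eventually_within
    · have h := (continuous_const.mul continuous_id :
        Continuous fun w : ℂ => q ^ (-m) * w).tendsto ((q:ℂ) ^ m)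
      simp only [Pi.mul_apply, id_eq] at h
      rw [show (q:ℂ) ^ (-m) * q ^ m = 1 by rw [mul_comm]; exact hqq] at h
      exact h.mono_left nhdsWithin_le_nhds
    · filter_upwards [self_mem_nhdsWithin] with w hw
      have hw' : w ≠ (q:ℂ) ^ m := hw
      intro h
      have h' : (q:ℂ) ^ (-m) * w = 1 := h
      exact hw' (by
        calc w = ((q:ℂ) ^ m * q ^ (-m)) * w := by rw [hqq, one_mul]
          _ = (q:ℂ) ^ m * (q ^ (-m) * w) := by ring
          _ = (q:ℂ) ^ m := by rw [h', mul_one])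
  have base := (tendsto_L1 hq0 hq1 hy hy').comp hmap
  have base2 := base.const_mul ((q:ℂ) ^ m * y ^ (-m))
  rw [show ((q:ℂ) ^ m * y ^ (-m)) * -B q y = -((q:ℂ) ^ m) * y ^ (-m) * B q y by ring] at base2
  refine Tendsto.congr' ?_ base2
  filter_upwards [eventually_good hq0 hq1 hy hy' m] with w hgood
  obtain ⟨hw0, hwq, hwy⟩ := hgood
  have hw'0 : (q:ℂ) ^ (-m) * w ≠ 0 := mul_ne_zero (zpow_ne_zero _ hq0) hw0
  have hw'q : ∀ k : ℤ, (q:ℂ) ^ (-m) * w ≠ q ^ k := shift_cond hq0 hwq (-m)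
  have hw'y : ∀ k : ℤ, y * ((q:ℂ) ^ (-m) * w) ≠ q ^ k := by
    intro k h
    exact shift_cond hq0 hwy (-m) k (by rw [← h]; ring)
  have hshift := A_shift hq0 hq1 hy hw'0 hw'q hw'y m
  have hcanc : (q:ℂ) ^ m * ((q:ℂ) ^ (-m) * w) = w := by
    rw [← mul_assoc, hqq, one_mul]
  rw [hcanc] at hshift
  simp only [Function.comp]
  rw [hshift]
  linear_combination (y ^ (-m) * A q y ((q:ℂ) ^ (-m) * w) * w) * hqq

end ResA

/-- Residues of u ↦ A(q,y,uv) and u ↦ A(q,y,(uv)⁻¹) at u = v⁻¹qᵐ. -/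
theorem residue_A_uv (q y v : ℂ) (hq0 : 0 < ‖q‖) (hq1 : ‖q‖ < 1)
    (hy : y ≠ 0) (hy' : ∀ k : ℤ, y ≠ q ^ k)
    (hv : v ≠ 0) (hv' : ∀ k : ℤ, v ≠ q ^ k) (m : ℤ) :
    Filter.Tendsto (fun u : ℂ => (u - v⁻¹ * q ^ m) * A q y (u * v))
      (𝓝[≠] (v⁻¹ * q ^ m)) (𝓝 (-v⁻¹ * q ^ m * y ^ (-m) * B q y)) ∧
    Filter.Tendsto (fun u : ℂ => (u - v⁻¹ * q ^ m) * A q y (u * v)⁻¹)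
      (𝓝[≠] (v⁻¹ * q ^ m)) (𝓝 (v⁻¹ * q ^ m * y ^ m * B q y)) := by
  have hq0' : q ≠ 0 := by
    intro h
    rw [h] at hq0
    simp at hq0
  have hq1' : ‖q‖ < 1 := by exact hq1
  have hqm : (q:ℂ) ^ m ≠ 0 := zpow_ne_zero m hq0'
  have hvq : v⁻¹ * (q:ℂ) ^ m ≠ 0 := mul_ne_zero (inv_ne_zero hv) hqm
  have hvv : v * v⁻¹ = 1 := mul_inv_cancel₀ hv
  have hqq : (q:ℂ) ^ m * q ^ (-m) = 1 := by
    rw [← zpow_add₀ hq0']; simp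
  constructor
  · -- first limit
    have hmap : Tendsto (fun u : ℂ => u * v) (𝓝[≠] (v⁻¹ * q ^ m)) (𝓝[≠] ((q:ℂ) ^ m)) := by
      apply tendsto_nhdsWithin_of_tendsto_nhds_of_eventually_within
      · exact ((continuous_id.mul continuous_const :
          Continuous fun u : ℂ => u * v).tendsto' (v⁻¹ * (q:ℂ) ^ m) ((q:ℂ) ^ m)
            (by simp only [Pi.mul_apply, id_eq]; linear_combination ((q:ℂ) ^ m) * hvv)).mono_left nhdsWithin_le_nhds
      · filter_upwards [self_mem_nhdsWithin] with u hu
        have hu' : u ≠ v⁻¹ * q ^ m := hu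
        intro h
        have h' : u * v = (q:ℂ) ^ m := h
        refine hu' ?_
        calc u = u * v * v⁻¹ := by rw [mul_assoc, hvv, mul_one]
          _ = v⁻¹ * q ^ m := by rw [h']; ring
    have base := (ResA.tendsto_Lm hq0' hq1' hy hy' m).comp hmap
    have base2 := base.const_mul (v⁻¹ : ℂ)
    rw [show v⁻¹ * (-((q:ℂ) ^ m) * y ^ (-m) * B q y)
      = -v⁻¹ * q ^ m * y ^ (-m) * B q y by ring] at base2
    refine Tendsto.congr ?_ base2
    intro u
    simp only [Function.comp_apply]
    linear_combination (A q y (u * v) * u) * hvv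
  · -- second limit
    have hmap2 : Tendsto (fun u : ℂ => (u * v)⁻¹) (𝓝[≠] (v⁻¹ * q ^ m))
        (𝓝[≠] ((q:ℂ) ^ (-m))) := by
      apply tendsto_nhdsWithin_of_tendsto_nhds_of_eventually_within
      · have hval : (v⁻¹ * (q:ℂ) ^ m) * v = q ^ m := by field_simp
        have hc : ContinuousAt (fun u : ℂ => (u * v)⁻¹) (v⁻¹ * q ^ m) := by
          refine ContinuousAt.inv₀ ((continuous_id.mul continuous_const :
            Continuous fun u : ℂ => u * v).continuousAt) ?_
          rw [hval]; exact hqm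
        have h2 : Tendsto (fun u : ℂ => (u * v)⁻¹) (𝓝 (v⁻¹ * q ^ m))
            (𝓝 (((v⁻¹ * (q:ℂ) ^ m) * v)⁻¹)) := hc.tendsto
        rw [hval, ← zpow_neg] at h2
        exact h2.mono_left nhdsWithin_le_nhds
      · filter_upwards [self_mem_nhdsWithin] with u hu
        have hu' : u ≠ v⁻¹ * q ^ m := hu
        intro h
        have h' : (u * v)⁻¹ = (q:ℂ) ^ (-m) := h
        have huv : u * v = (q:ℂ) ^ m := by
          rw [← inv_inv (u * v), h', ← zpow_neg, neg_neg]
        refine hu' ?_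
        calc u = u * v * v⁻¹ := by rw [mul_assoc, hvv, mul_one]
          _ = v⁻¹ * q ^ m := by rw [huv]; ring
    have base := (ResA.tendsto_Lm hq0' hq1' hy hy' (-m)).comp hmap2
    rw [neg_neg] at base
    have hcf : Tendsto (fun u : ℂ => -v⁻¹ * (q:ℂ) ^ m * (u * v))
        (𝓝[≠] (v⁻¹ * q ^ m)) (𝓝 (-v⁻¹ * (q:ℂ) ^ m * q ^ m)) := by
      exact ((continuous_const.mul (continuous_id.mul continuous_const) :
        Continuous fun u : ℂ => -v⁻¹ * (q:ℂ) ^ m * (u * v)).tendsto'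
          (v⁻¹ * (q:ℂ) ^ m) (-v⁻¹ * (q:ℂ) ^ m * q ^ m)
          (by simp only [Pi.mul_apply, id_eq]; linear_combination (-v⁻¹ * (q:ℂ) ^ m * (q:ℂ) ^ m) * hvv)).mono_left nhdsWithin_le_nhds
    have prod := hcf.mul base
    rw [show (-v⁻¹ * (q:ℂ) ^ m * q ^ m) * (-((q:ℂ) ^ (-m)) * y ^ m * B q y)
      = v⁻¹ * q ^ m * y ^ m * B q y from by
        linear_combination (v⁻¹ * (q:ℂ) ^ m * y ^ m * B q y) * hqq] at prod
    refine Tendsto.congr' ?_ prod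
    filter_upwards [nhdsWithin_le_nhds (eventually_ne_nhds hvq)] with u hu0
    have huv0 : u * v ≠ 0 := mul_ne_zero hu0 hv
    have huv1 : (u * v) * (u * v)⁻¹ = 1 := mul_inv_cancel₀ huv0
    simp only [Function.comp_apply]
    linear_combination (-(A q y ((u * v)⁻¹)) * v⁻¹ * (q:ℂ) ^ m) * huv1
      + (A q y ((u * v)⁻¹) * v⁻¹ * u * v) * hqq
      + (A q y ((u * v)⁻¹) * u) * hvv
end

section
/- Let q ∈ ℂ with 0 < |q| < 1, let y, v ∈ ℂ be nonzero with y ∉ {q^k : k ∈ ℤ} and v ∉ {q^k : k ∈ ℤ}, and let m ∈ ℤ. Define F(u) = A(q,y,u) · A(q,y,v) · A(q,y,(uv)^{−1}) + A(q,y,u^{−1}) · A(q,y,v^{−1}) · A(q,y,uv). Then the residue of F at u = q^m vanishes: lim_{u → q^m} (u − q^m) · F(u) = 0. -/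
open Complex Filter Topology

-- zero factor implies HasProd 0
lemma hasProd_zero_of_exists_zero {f : ℕ → ℂ} (h : ∃ n, f n = 0) : HasProd f 0 := by
  obtain ⟨b, hb⟩ := h
  have : ∀ᶠ s : Finset ℕ in atTop, ∏ i ∈ s, f i = 0 := by
    filter_upwards [Filter.eventually_ge_atTop ({b} : Finset ℕ)] with s hs
    exact Finset.prod_eq_zero (hs (Finset.mem_singleton_self b)) hb
  exact Tendsto.congr' (this.mono fun s hs => hs.symm) tendsto_const_nhds

-- exp of sum is prod
lemma hasProd_exp_of_summable {f w : ℕ → ℂ} (hw : Summable w)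
    (h : ∀ n, f n = Complex.exp (w n)) : HasProd f (Complex.exp (∑' n, w n)) := by
  have h2 := hw.hasSum.cexp
  have h3 : (Complex.exp ∘ w) = f := funext fun n => (h n).symm
  exact h3 ▸ h2

noncomputable def Pq (q x : ℂ) : ℂ := ∏' n : ℕ, (1 - x * q ^ n)

section P
variable {q : ℂ} (hq1 : ‖q‖ < 1)
include hq1

lemma summable_log_P (x : ℂ) : Summable (fun n : ℕ => Complex.log (1 - x * q ^ n)) := by
  have hg : Summable (fun n : ℕ => (3/2 : ℝ) * (‖x‖ * ‖q‖ ^ n)) :=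
    ((summable_geometric_of_lt_one (norm_nonneg q) hq1).mul_left _).mul_left _
  apply Summable.of_norm_bounded_eventually hg
  rw [Nat.cofinite_eq_atTop]
  have h0 : Tendsto (fun n : ℕ => ‖x‖ * ‖q‖ ^ n) atTop (𝓝 0) := by
    simpa using (tendsto_pow_atTop_nhds_zero_of_lt_one (norm_nonneg q) hq1).const_mul
      (‖x‖)
  filter_upwards [h0.eventually_le_const (by norm_num : (0:ℝ) < 1/2)] with n hn
  have hz : ‖(-(x * q ^ n) : ℂ)‖ ≤ 1/2 := by
    simpa [norm_mul, norm_pow] using hn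
  have := Complex.norm_log_one_add_half_le_self hz
  simp only [← sub_eq_add_neg] at this
  refine this.trans ?_
  simp [norm_mul, norm_pow]

lemma multipliable_P (x : ℂ) : Multipliable (fun n : ℕ => 1 - x * q ^ n) := by
  by_cases h : ∃ n : ℕ, 1 - x * q ^ n = 0
  · exact ⟨0, hasProd_zero_of_exists_zero h⟩
  · push_neg at h
    exact ⟨_, hasProd_exp_of_summable (summable_log_P hq1 x)
      (fun n => (Complex.exp_log (h n)).symm)⟩

lemma Pq_eq_exp {x : ℂ} (hx : ∀ n : ℕ, 1 - x * q ^ n ≠ 0) :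
    Pq q x = Complex.exp (∑' n : ℕ, Complex.log (1 - x * q ^ n)) :=
  (hasProd_exp_of_summable (summable_log_P hq1 x)
    (fun n => (Complex.exp_log (hx n)).symm)).tprod_eq

lemma Pq_ne_zero_s7 {x : ℂ} (hx : ∀ n : ℕ, 1 - x * q ^ n ≠ 0) : Pq q x ≠ 0 := by
  rw [Pq_eq_exp hq1 hx]; exact Complex.exp_ne_zero _

lemma Pq_shift (x : ℂ) (N : ℕ) :
    Pq q x = (∏ n ∈ Finset.range N, (1 - x * q ^ n)) * Pq q (q ^ N * x) := by
  have h2 : (fun n : ℕ => 1 - x * q ^ (n + N)) = (fun n : ℕ => 1 - (q ^ N * x) * q ^ n) := by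
    funext n; rw [pow_add]; ring
  have hm : Multipliable (fun n : ℕ => 1 - x * q ^ (n + N)) := by
    rw [h2]; exact multipliable_P hq1 _
  rw [Pq, Pq, ← Multipliable.prod_mul_tprod_nat_mul' (f := fun n : ℕ => 1 - x * q ^ n) (k := N) hm, h2]

end P

lemma Pq_eq_zero {q x : ℂ} (h : ∃ n : ℕ, 1 - x * q ^ n = 0) : Pq q x = 0 :=
  (hasProd_zero_of_exists_zero h).tprod_eq

section P2
variable {q : ℂ} (hq1 : ‖q‖ < 1)
include hq1

lemma continuous_Pq : Continuous (Pq q) := by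
  rw [continuous_iff_continuousAt]
  intro x₀
  -- choose N with ‖q‖^N * (‖x₀‖+1) ≤ 1/2
  obtain ⟨N, hN⟩ : ∃ N : ℕ, ‖q‖ ^ N * (‖x₀‖ + 1) ≤ 1/2 := by
    have h0 : Tendsto (fun n : ℕ => ‖q‖ ^ n * (‖x₀‖ + 1)) atTop (𝓝 0) := by
      simpa using (tendsto_pow_atTop_nhds_zero_of_lt_one (norm_nonneg q) hq1).mul_const
        (‖x₀‖ + 1)
    exact (h0.eventually_le_const (by norm_num : (0:ℝ) < 1/2)).exists
  -- on the ball of radius 1, the argument of the tail is small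
  have hsmall : ∀ x ∈ Metric.ball x₀ 1, ∀ n : ℕ,
      ‖(q ^ N * x) * q ^ n‖ ≤ (1/2) * ‖q‖ ^ n := by
    intro x hx n
    have hxb : ‖x‖ ≤ ‖x₀‖ + 1 := by
      have := mem_ball_iff_norm.mp hx
      calc ‖x‖ = ‖x₀ + (x - x₀)‖ := by ring_nf
        _ ≤ ‖x₀‖ + ‖x - x₀‖ := norm_add_le _ _
        _ ≤ ‖x₀‖ + 1 := by
            have : ‖x - x₀‖ ≤ 1 := le_of_lt (by simpa using this)
            linarith
    have : ‖(q ^ N * x) * q ^ n‖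
        = (‖q‖ ^ N * ‖x‖) * ‖q‖ ^ n := by
      simp [norm_mul, norm_pow]
    rw [this]
    have h1 : ‖q‖ ^ N * ‖x‖ ≤ 1/2 := by
      calc ‖q‖ ^ N * ‖x‖ ≤ ‖q‖ ^ N * (‖x₀‖ + 1) := by
            apply mul_le_mul_of_nonneg_left hxb (pow_nonneg (norm_nonneg q) N)
        _ ≤ 1/2 := hN
    exact mul_le_mul_of_nonneg_right h1 (pow_nonneg (norm_nonneg q) n)
  have hne : ∀ x ∈ Metric.ball x₀ 1, ∀ n : ℕ, 1 - (q ^ N * x) * q ^ n ≠ 0 := by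
    intro x hx n
    have := hsmall x hx n
    intro h
    have h2 : ‖(q ^ N * x) * q ^ n‖ = 1 := by
      have : (q ^ N * x) * q ^ n = 1 := by linear_combination -h
      rw [this]; simp
    have h3 : (1/2 : ℝ) * ‖q‖ ^ n ≤ 1/2 * 1 := by
      apply mul_le_mul_of_nonneg_left _ (by norm_num)
      exact pow_le_one₀ (norm_nonneg q) hq1.le
    rw [h2] at this; linarith
  -- the model function
  set g : ℂ → ℂ := fun x => (∏ n ∈ Finset.range N, (1 - x * q ^ n)) *
    Complex.exp (∑' n : ℕ, Complex.log (1 - (q ^ N * x) * q ^ n)) with hg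
  have heq : ∀ x ∈ Metric.ball x₀ 1, Pq q x = g x := by
    intro x hx
    rw [Pq_shift hq1 x N, Pq_eq_exp hq1 (hne x hx)]
  -- continuity of the tsum
  have hcont : ContinuousOn (fun x => ∑' n : ℕ, Complex.log (1 - (q ^ N * x) * q ^ n))
      (Metric.ball x₀ 1) := by
    apply continuousOn_tsum (u := fun n : ℕ => (3/2) * ((1/2) * ‖q‖ ^ n))
    · intro n
      apply ContinuousOn.clog
      · fun_prop
      · intro x hx
        rw [sub_eq_add_neg]
        apply Complex.mem_slitPlane_of_norm_lt_one
        rw [norm_neg]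
        calc ‖(q ^ N * x) * q ^ n‖ ≤ (1/2) * ‖q‖ ^ n := hsmall x hx n
          _ ≤ (1/2) * 1 := by
              apply mul_le_mul_of_nonneg_left _ (by norm_num)
              exact pow_le_one₀ (norm_nonneg q) hq1.le
          _ < 1 := by norm_num
    · exact (((summable_geometric_of_lt_one (norm_nonneg q) hq1).mul_left _).mul_left _)
    · intro n x hx
      have hz : ‖(-((q ^ N * x) * q ^ n) : ℂ)‖ ≤ 1/2 := by
        rw [norm_neg]
        calc ‖(q ^ N * x) * q ^ n‖ ≤ (1/2) * ‖q‖ ^ n := hsmall x hx n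
          _ ≤ (1/2) * 1 := by
              apply mul_le_mul_of_nonneg_left _ (by norm_num)
              exact pow_le_one₀ (norm_nonneg q) hq1.le
          _ ≤ 1/2 := by norm_num
      have hb := Complex.norm_log_one_add_half_le_self hz
      simp only [← sub_eq_add_neg] at hb
      refine hb.trans ?_
      rw [norm_neg]
      exact mul_le_mul_of_nonneg_left (hsmall x hx n) (by norm_num)
  have hgcont : ContinuousOn g (Metric.ball x₀ 1) := by
    apply ContinuousOn.mul
    · apply Continuous.continuousOn; fun_prop
    · exact hcont.cexp
  have := (hgcont.continuousAt (Metric.ball_mem_nhds x₀ one_pos))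
  apply this.congr
  filter_upwards [Metric.ball_mem_nhds x₀ one_pos] with x hx
  exact (heq x hx).symm

end P2

noncomputable def Thq (q x : ℂ) : ℂ := Pq q x * Pq q (q / x)

section Th
variable {q : ℂ} (hq1 : ‖q‖ < 1) (hq0 : q ≠ 0)
include hq1 hq0

lemma Pq_ne_zero_of_not_qpow {x : ℂ} (hx : ∀ k : ℤ, x ≠ q ^ k) : Pq q x ≠ 0 := by
  apply Pq_ne_zero_s7 hq1
  intro n h
  apply hx (-(n:ℤ))
  have hxq : x * q ^ n = 1 := by linear_combination -h
  rw [zpow_neg, zpow_natCast]; field_simp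
  linear_combination hxq

lemma Thq_ne_zero {x : ℂ} (hx0 : x ≠ 0) (hx : ∀ k : ℤ, x ≠ q ^ k) : Thq q x ≠ 0 := by
  apply mul_ne_zero
  · exact Pq_ne_zero_of_not_qpow hq1 hq0 hx
  · apply Pq_ne_zero_s7 hq1
    intro n h
    apply hx ((n:ℤ) + 1)
    have hxq : (q / x) * q ^ n = 1 := by linear_combination -h
    have : q ^ ((n:ℤ)+1) = q ^ n * q := by
      rw [zpow_add₀ hq0, zpow_natCast, zpow_one]
    rw [this]
    field_simp at hxq ⊢
    linear_combination (-1 : ℂ) * hxq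

lemma Thq_zero_at_qpow (k : ℤ) : Thq q (q ^ k) = 0 := by
  rcases le_or_gt k 0 with hk | hk
  · have : Pq q (q ^ k) = 0 := by
      apply Pq_eq_zero
      refine ⟨(-k).toNat, ?_⟩
      have : ((-k).toNat : ℤ) = -k := Int.toNat_of_nonneg (by linarith)
      have h2 : q ^ k * q ^ ((-k).toNat : ℕ) = 1 := by
        rw [← zpow_natCast q, this, ← zpow_add₀ hq0]
        simp
      rw [h2]; ring
    rw [Thq, this, zero_mul]
  · have : Pq q (q / q ^ k) = 0 := by
      apply Pq_eq_zero
      refine ⟨(k-1).toNat, ?_⟩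
      have ht : ((k-1).toNat : ℤ) = k - 1 := Int.toNat_of_nonneg (by linarith)
      have h2 : (q / q ^ k) * q ^ ((k-1).toNat : ℕ) = 1 := by
        rw [← zpow_natCast q, ht, div_mul_eq_mul_div,
          div_eq_one_iff_eq (zpow_ne_zero _ hq0), mul_comm, ← zpow_add_one₀ hq0]
        congr 1; ring
      rw [h2]; ring
    rw [Thq, this, mul_zero]

lemma Pq_shift1 (x : ℂ) : Pq q x = (1 - x) * Pq q (q * x) := by
  have := Pq_shift hq1 x 1
  simpa using this

lemma Thq_qmul {x : ℂ} (hx0 : x ≠ 0) : Thq q (q * x) = -x⁻¹ * Thq q x := by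
  by_cases hx : ∀ k : ℤ, x ≠ q ^ k
  · have h1 : x ≠ 1 := by simpa using hx 0
    have hqx : q / (q * x) = x⁻¹ := by field_simp
    have e1 : Pq q x = (1 - x) * Pq q (q * x) := Pq_shift1 hq1 hq0 x
    have e2 : Pq q x⁻¹ = (1 - x⁻¹) * Pq q (q / x) := by
      have := Pq_shift1 hq1 hq0 x⁻¹
      rwa [← div_eq_mul_inv] at this
    have h1x : (1:ℂ) - x ≠ 0 := by intro h; apply h1; linear_combination -h
    rw [Thq, hqx, Thq, e2]
    have e1' : Pq q (q * x) = Pq q x / (1 - x) := by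
      field_simp [e1]
      rw [e1]; ring
    rw [e1']
    field_simp
    ring
  · push_neg at hx
    obtain ⟨k, rfl⟩ := hx
    rw [Thq_zero_at_qpow hq1 hq0 k]
    have : q * q ^ k = q ^ (k + 1) := by
      rw [zpow_add₀ hq0, zpow_one]; ring
    rw [this, Thq_zero_at_qpow hq1 hq0 (k+1), mul_zero]

lemma Thq_inv {x : ℂ} (hx0 : x ≠ 0) : Thq q x⁻¹ = -x⁻¹ * Thq q x := by
  by_cases hx : ∀ k : ℤ, x ≠ q ^ k
  · have h1 : x ≠ 1 := by simpa using hx 0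
    have h1x : (1:ℂ) - x ≠ 0 := by intro h; apply h1; linear_combination -h
    have hqx : q / x⁻¹ = q * x := by field_simp
    have e1 : Pq q x = (1 - x) * Pq q (q * x) := Pq_shift1 hq1 hq0 x
    have e2 : Pq q x⁻¹ = (1 - x⁻¹) * Pq q (q / x) := by
      have := Pq_shift1 hq1 hq0 x⁻¹
      rwa [← div_eq_mul_inv] at this
    rw [Thq, hqx, e2, Thq]
    have e1' : Pq q (q * x) = Pq q x / (1 - x) := by
      field_simp [e1]
      rw [e1]; ring
    rw [e1']
    field_simp
    ring
  · push_neg at hx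
    obtain ⟨k, rfl⟩ := hx
    rw [Thq_zero_at_qpow hq1 hq0 k, ← zpow_neg, Thq_zero_at_qpow hq1 hq0 (-k), mul_zero]

end Th

section AeqTh
variable {q : ℂ} (hq1 : ‖q‖ < 1) (hq0 : q ≠ 0)
include hq1 hq0

omit hq1 in
lemma fact_ne_one {x : ℂ} (hx : ∀ k : ℤ, x ≠ q ^ k) : ∀ n : ℕ, 1 - x * q ^ n ≠ 0 := by
  intro n h
  apply hx (-(n:ℤ))
  have hxq : x * q ^ n = 1 := by linear_combination -h
  rw [zpow_neg, zpow_natCast]; field_simp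
  linear_combination hxq

omit hq1 in
lemma fact_ne_two {x : ℂ} (hx0 : x ≠ 0) (hx : ∀ k : ℤ, x ≠ q ^ k) :
    ∀ n : ℕ, 1 - (q / x) * q ^ n ≠ 0 := by
  intro n h
  apply hx ((n:ℤ) + 1)
  have hxq : (q / x) * q ^ n = 1 := by linear_combination -h
  have : q ^ ((n:ℤ)+1) = q ^ n * q := by
    rw [zpow_add₀ hq0, zpow_natCast, zpow_one]
  rw [this]
  field_simp at hxq ⊢
  linear_combination (-1 : ℂ) * hxq

omit hq1 in
lemma inv_pow_succ_eq {w : ℂ} (hw : w ≠ 0) (n : ℕ) : w⁻¹ * q ^ (n+1) = (q / w) * q ^ n := by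
  rw [pow_succ]
  field_simp

lemma A_eq_Thq {y u : ℂ} (hy : y ≠ 0) (hu0 : u ≠ 0) (hu : ∀ k : ℤ, u ≠ q ^ k) :
    A q y u = Thq q (y * u) / Thq q u := by
  have hyu : y * u ≠ 0 := mul_ne_zero hy hu0
  have hd1 : ∀ n : ℕ, 1 - u * q ^ n ≠ 0 := fact_ne_one hq0 hu
  have hd2 : ∀ n : ℕ, 1 - (q / u) * q ^ n ≠ 0 := fact_ne_two hq0 hu0 hu
  have hThu : Thq q u ≠ 0 := Thq_ne_zero hq1 hq0 hu0 hu
  have hrw1 : ∀ n : ℕ, (1 : ℂ) - (y*u)⁻¹ * q ^ (n+1) = 1 - (q / (y*u)) * q ^ n := by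
    intro n; rw [inv_pow_succ_eq hq0 hyu]
  have hrw2 : ∀ n : ℕ, (1 : ℂ) - u⁻¹ * q ^ (n+1) = 1 - (q / u) * q ^ n := by
    intro n; rw [inv_pow_succ_eq hq0 hu0]
  by_cases hnum : ∀ n : ℕ, (1 - y*u*q^n) ≠ 0 ∧ (1 - (q/(y*u))*q^n) ≠ 0
  · -- generic case
    set w : ℕ → ℂ := fun n => Complex.log (1 - y*u*q^n) + Complex.log (1 - (q/(y*u))*q^n)
      - Complex.log (1 - u*q^n) - Complex.log (1 - (q/u)*q^n) with hw
    have s1 := summable_log_P hq1 (q := q) (y*u)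
    have s2 := summable_log_P hq1 (q := q) (q/(y*u))
    have s3 := summable_log_P hq1 (q := q) u
    have s4 := summable_log_P hq1 (q := q) (q/u)
    have hsum : Summable w := ((s1.add s2).sub s3).sub s4
    have hterm : ∀ n : ℕ, ((1 - y * u * q ^ n) * (1 - (y * u)⁻¹ * q ^ (n + 1))) /
        ((1 - u * q ^ n) * (1 - u⁻¹ * q ^ (n + 1))) = Complex.exp (w n) := by
      intro n
      rw [hrw1 n, hrw2 n, hw]
      simp only [Complex.exp_sub, Complex.exp_add]
      rw [Complex.exp_log (hnum n).1, Complex.exp_log (hnum n).2,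
        Complex.exp_log (hd1 n), Complex.exp_log (hd2 n)]
      rw [← div_div]
    have hA : A q y u = Complex.exp (∑' n, w n) :=
      (hasProd_exp_of_summable hsum hterm).tprod_eq
    have htsum : ∑' n, w n = (∑' n, Complex.log (1 - y*u*q^n)) +
        (∑' n, Complex.log (1 - (q/(y*u))*q^n)) - (∑' n, Complex.log (1 - u*q^n))
        - (∑' n, Complex.log (1 - (q/u)*q^n)) := by
      rw [hw]
      rw [Summable.tsum_sub ((s1.add s2).sub s3) s4, Summable.tsum_sub (s1.add s2) s3, Summable.tsum_add s1 s2]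
    rw [hA, htsum, Thq, Thq, Pq_eq_exp hq1 (fun n => (hnum n).1),
      Pq_eq_exp hq1 (fun n => (hnum n).2), Pq_eq_exp hq1 hd1, Pq_eq_exp hq1 hd2]
    rw [Complex.exp_sub, Complex.exp_sub, Complex.exp_add]
    rw [div_div]
  · -- a numerator factor vanishes
    push_neg at hnum
    obtain ⟨n, hn⟩ := hnum
    have hA : A q y u = 0 := by
      apply (hasProd_zero_of_exists_zero _).tprod_eq
      refine ⟨n, ?_⟩
      rcases Classical.em (1 - y*u*q^n = 0) with h | h
      · rw [h, zero_mul, zero_div]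
      · rw [hrw1 n, hn h, mul_zero, zero_div]
    have hTh : Thq q (y * u) = 0 := by
      rcases Classical.em (1 - y*u*q^n = 0) with h | h
      · rw [Thq, Pq_eq_zero ⟨n, h⟩, zero_mul]
      · rw [Thq, Pq_eq_zero (x := q/(y*u)) ⟨n, hn h⟩, mul_zero]
    rw [hA, hTh, zero_div]

end AeqTh

section Fac
variable {q : ℂ} (hq1 : ‖q‖ < 1) (hq0 : q ≠ 0)
include hq1 hq0

omit hq1 in
lemma abs_zpow_ne_one (hq0' : 0 < ‖q‖) {k : ℤ} (hk : k ≠ 0)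
    (h1 : ‖q‖ < 1) : (1:ℂ) - q ^ k ≠ 0 := by
  intro h
  have hqk : (q : ℂ) ^ k = 1 := by linear_combination -h
  have : ‖q ^ k‖ = 1 := by rw [hqk]; simp
  rw [norm_zpow] at this
  have := zpow_right_injective₀ hq0' (ne_of_lt h1) (a := ‖q‖)
    (by simpa using this : ‖q‖ ^ k = ‖q‖ ^ (0:ℤ))
  exact hk this

lemma Pq_ne_zero_zpow (j : ℤ) (hj : 1 ≤ j) : Pq q (q ^ j) ≠ 0 := by
  apply Pq_ne_zero_s7 hq1
  intro n
  have : q ^ j * q ^ n = q ^ (j + (n:ℤ)) := by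
    rw [zpow_add₀ hq0, zpow_natCast]
  rw [this]
  exact abs_zpow_ne_one hq0 (norm_pos_iff.mpr hq0) (by omega) hq1

lemma Thq_factor (m : ℤ) : ∃ S : ℂ → ℂ, ContinuousAt S (q ^ m) ∧ S (q ^ m) ≠ 0 ∧
    ∀ᶠ u in 𝓝 (q ^ m), Thq q u * u = (u - q ^ m) * S u := by
  have hqm0 : (q : ℂ) ^ m ≠ 0 := zpow_ne_zero m hq0
  have habs : 0 < ‖q‖ := norm_pos_iff.mpr hq0
  have hne0 : ∀ᶠ u in 𝓝 (q ^ m), u ≠ 0 := eventually_ne_nhds hqm0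
  have hPqq : Pq q q ≠ 0 := by
    have := Pq_ne_zero_zpow hq1 hq0 1 le_rfl
    rwa [zpow_one] at this
  have hcdiv : ContinuousAt (fun u : ℂ => q / u) (q ^ m) :=
    ContinuousAt.div continuousAt_const continuousAt_id hqm0
  rcases lt_or_ge 0 m with hm | hm
  · -- m ≥ 1 : the vanishing factor is in Pq q (q/u)
    set M := m.toNat with hM
    have hMm : (M : ℤ) = m := Int.toNat_of_nonneg hm.le
    have hM1 : 1 ≤ M := by omega
    refine ⟨fun u => Pq q u * (∏ n ∈ Finset.range (M-1), (1 - (q/u)*q^n)) *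
      Pq q (q ^ M * (q/u)), ?_, ?_, ?_⟩
    · apply ContinuousAt.mul
      apply ContinuousAt.mul
      · exact (continuous_Pq hq1).continuousAt
      · exact tendsto_finset_prod _ (fun n _ =>
          ContinuousAt.sub continuousAt_const (hcdiv.mul continuousAt_const))
      · exact ContinuousAt.comp (g := Pq q) ((continuous_Pq hq1).continuousAt)
          (ContinuousAt.mul continuousAt_const hcdiv)
    · apply mul_ne_zero
      apply mul_ne_zero
      · exact Pq_ne_zero_zpow hq1 hq0 m (by omega)
      · rw [Finset.prod_ne_zero_iff]
        intro n hn
        have e : (q:ℂ) / q^m * q^n = q^(1 - m + (n:ℤ)) := by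
          rw [zpow_add₀ hq0, zpow_sub₀ hq0, zpow_one, zpow_natCast]
        rw [e]
        have hn' : n < M - 1 := Finset.mem_range.mp hn
        exact abs_zpow_ne_one hq0 habs (by omega) hq1
      · have e : (q:ℂ)^M * (q/q^m) = q := by
          rw [← zpow_natCast q M, hMm]; field_simp
        rw [e]; exact hPqq
    · filter_upwards [hne0] with u hu
      have hqq : q * q ^ (M-1) = q ^ m := by
        rw [mul_comm, ← pow_succ, ← zpow_natCast q]
        congr 1; omega
      have key : Pq q (q/u) = (∏ n ∈ Finset.range (M-1), (1 - (q/u)*q^n)) *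
          ((u - q^m)/u) * Pq q (q ^ M * (q/u)) := by
        have h1 : Pq q (q/u) = (∏ n ∈ Finset.range M, (1 - (q/u)*q^n)) *
            Pq q (q ^ M * (q/u)) := Pq_shift hq1 (q/u) M
        have h2 : ∏ n ∈ Finset.range M, (1 - (q/u)*q^n)
            = (∏ n ∈ Finset.range (M-1), (1 - (q/u)*q^n)) * (1 - (q/u)*q^(M-1)) := by
          conv_lhs => rw [show M = (M-1)+1 by omega]
          rw [Finset.prod_range_succ]
        have h3 : (1:ℂ) - (q/u)*q^(M-1) = (u - q^m)/u := by
          field_simp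
          linear_combination -hqq
        rw [h1, h2, h3]
      rw [Thq, key]
      field_simp
  · -- m ≤ 0 : the vanishing factor is in Pq q u
    set M := (-m).toNat with hM
    have hMm : (M : ℤ) = -m := Int.toNat_of_nonneg (by omega)
    refine ⟨fun u => -q^M * u * ((∏ n ∈ Finset.range M, (1 - u*q^n)) *
      Pq q (q ^ (M+1) * u) * Pq q (q/u)), ?_, ?_, ?_⟩
    · apply ContinuousAt.mul
      · fun_prop
      apply ContinuousAt.mul
      apply ContinuousAt.mul
      · exact tendsto_finset_prod _ (fun n _ =>
          ContinuousAt.sub continuousAt_const (continuousAt_id.mul continuousAt_const))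
      · exact ContinuousAt.comp (g := Pq q) ((continuous_Pq hq1).continuousAt)
          (ContinuousAt.mul continuousAt_const continuousAt_id)
      · exact ContinuousAt.comp (g := Pq q) ((continuous_Pq hq1).continuousAt) hcdiv
    · apply mul_ne_zero (mul_ne_zero (neg_ne_zero.mpr (pow_ne_zero M hq0)) hqm0)
      apply mul_ne_zero
      apply mul_ne_zero
      · rw [Finset.prod_ne_zero_iff]
        intro n hn
        have e : q ^ m * q ^ n = q ^ (m + (n:ℤ)) := by
          rw [zpow_add₀ hq0, zpow_natCast]
        rw [e]
        have hn' : n < M := Finset.mem_range.mp hn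
        exact abs_zpow_ne_one hq0 habs (by omega) hq1
      · have e : (q:ℂ) ^ (M+1) * q ^ m = q := by
          rw [← zpow_natCast q (M+1), ← zpow_add₀ hq0]
          have : ((M+1:ℕ):ℤ) + m = 1 := by push_cast; omega
          rw [this, zpow_one]
        rw [e]; exact hPqq
      · have e : (q:ℂ)^(1-m) = q / q ^ m := by rw [zpow_sub₀ hq0, zpow_one]
        rw [← e]
        exact Pq_ne_zero_zpow hq1 hq0 (1-m) (by omega)
    · filter_upwards [hne0] with u hu
      have key : Pq q u = (∏ n ∈ Finset.range M, (1 - u*q^n)) *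
          (-q^M * (u - q^m)) * Pq q (q ^ (M+1) * u) := by
        have h1 : Pq q u = (∏ n ∈ Finset.range (M+1), (1 - u*q^n)) *
            Pq q (q ^ (M+1) * u) := Pq_shift hq1 u (M+1)
        have h2 : ∏ n ∈ Finset.range (M+1), (1 - u*q^n)
            = (∏ n ∈ Finset.range M, (1 - u*q^n)) * (1 - u*q^M) :=
          Finset.prod_range_succ _ _
        have h3 : (1:ℂ) - u*q^M = -q^M * (u - q^m) := by
          have e : q ^ M * q ^ m = 1 := by
            rw [← zpow_natCast q M, ← zpow_add₀ hq0, hMm]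
            simp
          linear_combination -e
        rw [h1, h2, h3]
      rw [Thq, key]
      ring
end Fac

section Avoid
variable {q : ℂ} (hq1 : ‖q‖ < 1) (hq0 : q ≠ 0)
include hq1 hq0

lemma finite_close_qpow {w₀ : ℂ} (hw : w₀ ≠ 0) :
    {k : ℤ | dist ((q:ℂ)^k) w₀ < ‖w₀‖ / 2}.Finite := by
  have habs : 0 < ‖q‖ := norm_pos_iff.mpr hq0
  have hq1' : ‖q‖ < 1 := hq1
  have hr : 0 < ‖w₀‖ := norm_pos_iff.mpr hw
  set r := ‖w₀‖ with hrdef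
  have hcof : ∀ᶠ k : ℤ in Filter.cofinite, ¬ (dist ((q:ℂ)^k) w₀ < r / 2) := ?_
  · have := Filter.eventually_cofinite.mp hcof
    simpa using this
  rw [Int.cofinite_eq, Filter.eventually_sup]
  have hdist : ∀ k : ℤ, r - ‖(q:ℂ)^k‖ ≤ dist ((q:ℂ)^k) w₀ ∧
      ‖(q:ℂ)^k‖ - r ≤ dist ((q:ℂ)^k) w₀ := by
    intro k
    rw [dist_eq_norm]
    constructor
    · calc r - ‖(q:ℂ)^k‖ ≤ ‖w₀ - q^k‖ := by
            have := norm_sub_norm_le (w₀) ((q:ℂ)^k); linarith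
        _ = ‖(q:ℂ)^k - w₀‖ := by rw [norm_sub_rev]
    · have := norm_sub_norm_le ((q:ℂ)^k) w₀; linarith
  constructor
  · -- k → -∞ : ‖q^k‖ large
    obtain ⟨L, hL⟩ := pow_unbounded_of_one_lt (2*r) (one_lt_inv_iff₀.mpr ⟨habs, hq1'⟩)
    rw [Filter.eventually_atBot]
    refine ⟨-(L:ℤ), fun k hk h => ?_⟩
    have h1 : (2*r : ℝ) < ‖q‖ ^ (-(L:ℤ)) := by
      rwa [zpow_neg, zpow_natCast, ← inv_pow]
    have h2 : ‖q‖ ^ (-(L:ℤ)) ≤ ‖q‖ ^ k := by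
      apply zpow_le_zpow_right_of_le_one₀ habs hq1'.le hk
    have h4 : ‖(q:ℂ)^k‖ = ‖q‖ ^ k := by rw [norm_zpow]
    have := (hdist k).2
    rw [h4] at this
    linarith
  · -- k → +∞ : ‖q^k‖ small
    have h0 : Tendsto (fun n : ℕ => ‖q‖ ^ n) atTop (𝓝 0) :=
      tendsto_pow_atTop_nhds_zero_of_lt_one habs.le hq1'
    obtain ⟨L, hL⟩ := (h0.eventually_lt_const (by linarith : (0:ℝ) < r/2)).exists
    rw [Filter.eventually_atTop]
    refine ⟨(L:ℤ), fun k hk h => ?_⟩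
    have h2 : ‖q‖ ^ k ≤ ‖q‖ ^ (L:ℤ) := by
      apply zpow_le_zpow_right_of_le_one₀ habs hq1'.le hk
    have h4 : ‖(q:ℂ)^k‖ = ‖q‖ ^ k := by rw [norm_zpow]
    have h5 : ‖q‖ ^ (L:ℤ) < r/2 := by rw [zpow_natCast]; exact hL
    have := (hdist k).1
    rw [h4] at this
    linarith

lemma eventually_avoid_qpow {w₀ : ℂ} (hw : w₀ ≠ 0) :
    ∀ᶠ w in 𝓝[≠] w₀, ∀ k : ℤ, w ≠ q ^ k := by
  have hfin := finite_close_qpow hq1 hq0 hw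
  have hr : 0 < ‖w₀‖ := norm_pos_iff.mpr hw
  set A : Set ℂ := ((fun k : ℤ => (q:ℂ)^k) '' {k : ℤ | dist ((q:ℂ)^k) w₀ < ‖w₀‖ / 2}) \ {w₀}
    with hA
  have hAfin : A.Finite := (hfin.image _).diff
  have hAw : w₀ ∉ A := fun h => h.2 rfl
  have ev1 : ∀ᶠ w in 𝓝 w₀, w ∉ A := hAfin.isClosed.isOpen_compl.mem_nhds hAw
  have ev2 : ∀ᶠ w in 𝓝 w₀, dist w w₀ < ‖w₀‖/2 := Metric.ball_mem_nhds _ (by linarith)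
  filter_upwards [ev1.filter_mono nhdsWithin_le_nhds, ev2.filter_mono nhdsWithin_le_nhds,
    self_mem_nhdsWithin] with w h1 h2 h3
  intro k hk
  rcases lt_or_ge (dist ((q:ℂ)^k) w₀) (‖w₀‖/2) with hc | hc
  · -- q^k is one of the finitely many close points
    rcases Classical.em ((q:ℂ)^k = w₀) with he | he
    · exact h3 (by rw [hk, he]; rfl)
    · exact h1 (by rw [hk]; exact ⟨Set.mem_image_of_mem _ hc, he⟩)
  · rw [← hk] at hc
    linarith

end Avoid

section Star
variable {q : ℂ} (hq1 : ‖q‖ < 1) (hq0 : q ≠ 0)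
include hq1 hq0

lemma Thq_unmul {x : ℂ} (hx0 : x ≠ 0) : Thq q x = -x * Thq q (q * x) := by
  rw [Thq_qmul hq1 hq0 hx0]
  field_simp

lemma star_identity {y v : ℂ} (hy : y ≠ 0) (hv : v ≠ 0) (m : ℤ) :
    Thq q (y * q^m) * Thq q (y*v) * Thq q (y * (q^m * v)⁻¹)
      = Thq q (y * (q^m)⁻¹) * Thq q (y * v⁻¹) * Thq q (y * (q^m * v)) := by
  induction m using Int.induction_on with
  | zero => simp; ring
  | succ i ih =>
    have hp0 : (q:ℂ)^(i:ℤ) ≠ 0 := zpow_ne_zero _ hq0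
    have hp0' : (q:ℂ)^((i:ℤ)+1) ≠ 0 := zpow_ne_zero _ hq0
    set p : ℂ := q^(i:ℤ) with hp
    have hq' : (q:ℂ)^((i:ℤ)+1) = q * p := by rw [zpow_add_one₀ hq0]; ring
    have ha : Thq q (y * q^((i:ℤ)+1)) = -(y*p)⁻¹ * Thq q (y*p) := by
      rw [hq', show y*(q*p) = q*(y*p) by ring]
      exact Thq_qmul hq1 hq0 (mul_ne_zero hy hp0)
    have hb : Thq q (y * (q^((i:ℤ)+1) * v)⁻¹)
        = -(y * (q^((i:ℤ)+1) * v)⁻¹) * Thq q (y * (p * v)⁻¹) := by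
      have hx0 : y * (q^((i:ℤ)+1) * v)⁻¹ ≠ 0 := by
        apply mul_ne_zero hy (inv_ne_zero (mul_ne_zero hp0' hv))
      have harg : q * (y * (q^((i:ℤ)+1) * v)⁻¹) = y * (p * v)⁻¹ := by
        rw [hq']; field_simp
      rw [← harg]
      exact Thq_unmul hq1 hq0 hx0
    have hc : Thq q (y * (q^((i:ℤ)+1))⁻¹)
        = -(y * (q^((i:ℤ)+1))⁻¹) * Thq q (y * p⁻¹) := by
      have hx0 : y * (q^((i:ℤ)+1))⁻¹ ≠ 0 := mul_ne_zero hy (inv_ne_zero hp0')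
      have harg : q * (y * (q^((i:ℤ)+1))⁻¹) = y * p⁻¹ := by
        rw [hq']; field_simp
      rw [← harg]
      exact Thq_unmul hq1 hq0 hx0
    have hd : Thq q (y * (q^((i:ℤ)+1) * v)) = -(y*p*v)⁻¹ * Thq q (y * (p*v)) := by
      rw [hq', show y*(q*p*v) = q*(y*(p*v)) by ring, show (y*p*v) = y*(p*v) by ring]
      exact Thq_qmul hq1 hq0 (mul_ne_zero hy (mul_ne_zero hp0 hv))
    rw [ha, hb, hc, hd]
    rw [hq']
    set T1 := Thq q (y * p) with hT1
    set T2 := Thq q (y * v) with hT2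
    set T3 := Thq q (y * (p * v)⁻¹) with hT3
    set T4 := Thq q (y * p⁻¹) with hT4
    set T5 := Thq q (y * v⁻¹) with hT5
    set T6 := Thq q (y * (p * v)) with hT6
    clear_value T1 T2 T3 T4 T5 T6
    clear hT1 hT2 hT3 hT4 hT5 hT6 ha hb hc hd hq' hp hp0'
    field_simp
    linear_combination ih
  | pred i ih =>
    have hp0 : (q:ℂ)^(-(i:ℤ)) ≠ 0 := zpow_ne_zero _ hq0
    have hp0' : (q:ℂ)^(-(i:ℤ)-1) ≠ 0 := zpow_ne_zero _ hq0
    set p : ℂ := q^(-(i:ℤ)) with hp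
    have hq' : (q:ℂ)^(-(i:ℤ)-1) = p / q := by
      rw [zpow_sub₀ hq0, zpow_one]
    have ha : Thq q (y * q^(-(i:ℤ)-1)) = -(y * q^(-(i:ℤ)-1)) * Thq q (y*p) := by
      have hx0 : y * (q:ℂ)^(-(i:ℤ)-1) ≠ 0 := mul_ne_zero hy hp0'
      have harg : q * (y * (q:ℂ)^(-(i:ℤ)-1)) = y * p := by
        rw [hq']; field_simp
      rw [← harg]
      exact Thq_unmul hq1 hq0 hx0
    have hb : Thq q (y * (q^(-(i:ℤ)-1) * v)⁻¹)
        = -(y * (p * v)⁻¹)⁻¹ * Thq q (y * (p * v)⁻¹) := by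
      have harg : y * (q^(-(i:ℤ)-1) * v)⁻¹ = q * (y * (p * v)⁻¹) := by
        rw [hq']; field_simp
      rw [harg]
      exact Thq_qmul hq1 hq0 (mul_ne_zero hy (inv_ne_zero (mul_ne_zero hp0 hv)))
    have hc : Thq q (y * (q^(-(i:ℤ)-1))⁻¹) = -(y * p⁻¹)⁻¹ * Thq q (y * p⁻¹) := by
      have harg : y * (q^(-(i:ℤ)-1))⁻¹ = q * (y * p⁻¹) := by
        rw [hq']; field_simp
      rw [harg]
      exact Thq_qmul hq1 hq0 (mul_ne_zero hy (inv_ne_zero hp0))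
    have hd : Thq q (y * (q^(-(i:ℤ)-1) * v)) = -(y * (q^(-(i:ℤ)-1) * v)) * Thq q (y * (p*v)) := by
      have hx0 : y * ((q:ℂ)^(-(i:ℤ)-1) * v) ≠ 0 := mul_ne_zero hy (mul_ne_zero hp0' hv)
      have harg : q * (y * (q^(-(i:ℤ)-1) * v)) = y * (p * v) := by
        rw [hq']; field_simp
      rw [← harg]
      exact Thq_unmul hq1 hq0 hx0
    rw [ha, hb, hc, hd]
    rw [hq']
    set T1 := Thq q (y * p) with hT1
    set T2 := Thq q (y * v) with hT2
    set T3 := Thq q (y * (p * v)⁻¹) with hT3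
    set T4 := Thq q (y * p⁻¹) with hT4
    set T5 := Thq q (y * v⁻¹) with hT5
    set T6 := Thq q (y * (p * v)) with hT6
    clear_value T1 T2 T3 T4 T5 T6
    clear hT1 hT2 hT3 hT4 hT5 hT6 ha hb hc hd hq' hp hp0'
    field_simp
    linear_combination ih

end Star

/-- The residue of F(u) = A(q,y,u)A(q,y,v)A(q,y,(uv)⁻¹) + A(q,y,u⁻¹)A(q,y,v⁻¹)A(q,y,uv)
at u = qᵐ vanishes. -/
theorem residue_F_at_qm_vanishes (q y v : ℂ)
    (hq0 : 0 < ‖q‖) (hq1 : ‖q‖ < 1)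
    (hy : y ≠ 0) (hy' : ∀ k : ℤ, y ≠ q ^ k)
    (hv : v ≠ 0) (hv' : ∀ k : ℤ, v ≠ q ^ k) (m : ℤ) :
    Filter.Tendsto
      (fun u : ℂ => (u - q ^ m) *
        (A q y u * A q y v * A q y (u * v)⁻¹ +
          A q y u⁻¹ * A q y v⁻¹ * A q y (u * v)))
      (𝓝[≠] (q ^ m)) (𝓝 0) := by
  have hqne : q ≠ 0 := by
    intro h; rw [h] at hq0; simp at hq0
  have hp0 : (q:ℂ) ^ m ≠ 0 := zpow_ne_zero m hqne
  have hpv0 : (q:ℂ) ^ m * v ≠ 0 := mul_ne_zero hp0 hv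
  -- (q^m * v) is not a power of q
  have hpv' : ∀ k : ℤ, (q:ℂ)^m * v ≠ q ^ k := by
    intro k h
    apply hv' (k - m)
    rw [zpow_sub₀ hqne]
    field_simp
    linear_combination h
  have hvinv' : ∀ k : ℤ, v⁻¹ ≠ q ^ k := by
    intro k h
    apply hv' (-k)
    rw [zpow_neg, ← h, inv_inv]
  have hpvinv' : ∀ k : ℤ, ((q:ℂ)^m * v)⁻¹ ≠ q ^ k := by
    intro k h
    apply hpv' (-k)
    rw [zpow_neg, ← h, inv_inv]
  -- continuity of Thq away from 0
  have hThqc : ∀ x₀ : ℂ, x₀ ≠ 0 → ContinuousAt (Thq q) x₀ := by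
    intro x₀ hx₀
    apply ContinuousAt.mul
    · exact (continuous_Pq hq1).continuousAt
    · exact ContinuousAt.comp (g := Pq q) ((continuous_Pq hq1).continuousAt)
        (ContinuousAt.div continuousAt_const continuousAt_id hx₀)
  obtain ⟨S, hScont, hSne, hSfac⟩ := Thq_factor hq1 hqne m
  set N : ℂ → ℂ := fun u => Thq q (y*u) * A q y v * (Thq q (y*(u*v)⁻¹) / Thq q ((u*v)⁻¹))
      - u * (Thq q (y*u⁻¹) * A q y v⁻¹ * (Thq q (y*(u*v)) / Thq q (u*v))) with hN
  -- Step 1: eventual equality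
  have heq : ∀ᶠ u in 𝓝[≠] (q^m), (u - q ^ m) *
      (A q y u * A q y v * A q y (u * v)⁻¹ + A q y u⁻¹ * A q y v⁻¹ * A q y (u * v))
      = u * N u / S u := by
    have hmul : Tendsto (fun u : ℂ => u * v) (𝓝[≠] (q^m)) (𝓝[≠] ((q^m) * v)) := by
      rw [nhdsWithin, nhdsWithin]
      apply Filter.Tendsto.inf
      · exact (continuous_id.mul continuous_const).tendsto (q^m)
      · rw [Filter.tendsto_principal_principal]
        intro u hu h
        exact hu (mul_right_cancel₀ hv h)
    filter_upwards [eventually_avoid_qpow hq1 hqne hp0,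
      hmul.eventually (eventually_avoid_qpow hq1 hqne hpv0),
      (eventually_ne_nhds hp0).filter_mono nhdsWithin_le_nhds,
      hSfac.filter_mono nhdsWithin_le_nhds,
      self_mem_nhdsWithin] with u hu huv hu0 hfac hne
    simp only [Set.mem_compl_iff, Set.mem_singleton_iff] at hne
    have huv0 : u * v ≠ 0 := mul_ne_zero hu0 hv
    have huinv : ∀ k : ℤ, u⁻¹ ≠ q ^ k := by
      intro k h; apply hu (-k); rw [zpow_neg, ← h, inv_inv]
    have huvinv : ∀ k : ℤ, (u*v)⁻¹ ≠ q ^ k := by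
      intro k h; apply huv (-k); rw [zpow_neg, ← h, inv_inv]
    rw [A_eq_Thq hq1 hqne hy hu0 hu, A_eq_Thq hq1 hqne hy (inv_ne_zero huv0) huvinv,
      A_eq_Thq hq1 hqne hy (inv_ne_zero hu0) huinv, A_eq_Thq hq1 hqne hy huv0 huv]
    simp only [hN]
    rw [Thq_inv hq1 hqne hu0]
    have hThu : Thq q u ≠ 0 := Thq_ne_zero hq1 hqne hu0 hu
    have hThuv : Thq q (u*v) ≠ 0 := Thq_ne_zero hq1 hqne huv0 huv
    have hThuvi : Thq q ((u*v)⁻¹) ≠ 0 := Thq_ne_zero hq1 hqne (inv_ne_zero huv0) huvinv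
    have hSu : S u ≠ 0 := by
      intro h
      rw [h, mul_zero] at hfac
      exact (mul_ne_zero hThu hu0) hfac
    have hup : u - q^m ≠ 0 := sub_ne_zero.mpr hne
    set a1 := Thq q (y*u) with ha1
    set a2 := A q y v with ha2
    set a3 := Thq q (y*(u*v)⁻¹) with ha3
    set a4 := Thq q ((u*v)⁻¹) with ha4
    set a5 := Thq q u with ha5
    set a6 := Thq q (y*u⁻¹) with ha6
    set a7 := A q y v⁻¹ with ha7
    set a8 := Thq q (y*(u*v)) with ha8
    set a9 := Thq q (u*v) with ha9
    set s := S u with hs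
    clear_value a1 a2 a3 a4 a5 a6 a7 a8 a9 s
    field_simp
    linear_combination ((a1*a2*a3*(a5*a9) - a6*u*a7*a8*(a5*a4))*a4*a9 + (1 + a4*a5*a9)*(u*a4*a6*a7*a8 - a1*a2*a3*a9)) * hfac
  -- Step 2: N (q^m) = 0
  have hNp : N (q^m) = 0 := by
    have star := star_identity hq1 hqne hy hv m
    have hThv : Thq q v ≠ 0 := Thq_ne_zero hq1 hqne hv hv'
    have hThpv : Thq q ((q:ℂ)^m*v) ≠ 0 := Thq_ne_zero hq1 hqne hpv0 hpv'
    simp only [hN]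
    rw [A_eq_Thq hq1 hqne hy hv hv', A_eq_Thq hq1 hqne hy (inv_ne_zero hv) hvinv',
      Thq_inv hq1 hqne hpv0, Thq_inv hq1 hqne hv]
    set b1 := Thq q (y*(q^m)) with hb1
    set b2 := Thq q (y*v) with hb2
    set b3 := Thq q (y*((q^m)*v)⁻¹) with hb3
    set b4 := Thq q (y*((q^m))⁻¹) with hb4
    set b5 := Thq q (y*v⁻¹) with hb5
    set b6 := Thq q (y*((q^m)*v)) with hb6
    set b7 := Thq q v with hb7
    set b8 := Thq q ((q^m)*v) with hb8
    clear_value b1 b2 b3 b4 b5 b6 b7 b8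
    field_simp
    linear_combination (-(q:ℂ)^m*v) * star
  -- Step 3: the limit
  have hlim : Tendsto (fun u => u * N u / S u) (𝓝[≠] (q^m)) (𝓝 0) := by
    have hcont : ContinuousAt (fun u => u * N u / S u) (q^m) := by
      apply ContinuousAt.div
      · apply ContinuousAt.mul continuousAt_id
        rw [hN]
        apply ContinuousAt.sub
        · apply ContinuousAt.mul
          apply ContinuousAt.mul
          · exact ContinuousAt.comp (g := Thq q)
              (hThqc _ (mul_ne_zero hy hp0)) (by fun_prop)
          · exact continuousAt_const
          · apply ContinuousAt.div
            · exact ContinuousAt.comp (g := Thq q)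
                (hThqc _ (mul_ne_zero hy (inv_ne_zero hpv0)))
                (continuousAt_const.mul ((continuousAt_id.mul continuousAt_const).inv₀ hpv0))
            · exact ContinuousAt.comp (g := Thq q)
                (hThqc _ (inv_ne_zero hpv0))
                ((continuousAt_id.mul continuousAt_const).inv₀ hpv0)
            · exact Thq_ne_zero hq1 hqne (inv_ne_zero hpv0) hpvinv'
        · apply ContinuousAt.mul continuousAt_id
          apply ContinuousAt.mul
          apply ContinuousAt.mul
          · exact ContinuousAt.comp (g := Thq q)
              (hThqc _ (mul_ne_zero hy (inv_ne_zero hp0)))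
              (continuousAt_const.mul (continuousAt_id.inv₀ hp0))
          · exact continuousAt_const
          · apply ContinuousAt.div
            · exact ContinuousAt.comp (g := Thq q)
                (hThqc _ (mul_ne_zero hy hpv0))
                (continuousAt_const.mul (continuousAt_id.mul continuousAt_const))
            · exact ContinuousAt.comp (g := Thq q) (hThqc _ hpv0)
                (continuousAt_id.mul continuousAt_const)
            · exact Thq_ne_zero hq1 hqne hpv0 hpv'
      · exact hScont
      · exact hSne
    have : Tendsto (fun u => u * N u / S u) (𝓝[≠] (q^m)) (𝓝 ((q^m) * N (q^m) / S (q^m))) :=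
      hcont.tendsto.mono_left nhdsWithin_le_nhds
    rw [hNp] at this
    simpa using this
  exact hlim.congr' (heq.mono fun u hu => hu.symm)
end

section
/- Let V be a finite set and for each v ∈ V let (a¹ᵥ, b¹ᵥ), (a²ᵥ, b²ᵥ), (a³ᵥ, b³ᵥ) ∈ ℤ × ℤ satisfy the balancing condition a¹ᵥ + a²ᵥ + a³ᵥ = 0 and b¹ᵥ + b²ᵥ + b³ᵥ = 0. Let τ be in the complex upper half-plane and t₁, t₂ ∈ ℂ be such that aʲᵥ t₁ + bʲᵥ t₂ ∉ ℤ + τℤ for every v ∈ V and j ∈ {1,2,3}. Then for every z ∈ ℂ, Z(τ, z+τ; t₁, t₂) = (−e^{−2πiz − πiτ})³ · Z(τ, z; t₁, t₂), i.e. Z(τ, z+τ; t₁, t₂) = −e^{−6πiz − 3πiτ} · Z(τ, z; t₁, t₂). -/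
open Complex Filter Topology

/-- Quasi-periodicity of θ₁ in `z ↦ z + τ`. -/
lemma theta1_quasi (τ z : ℂ) :
    theta1 τ (z + τ) = -Complex.exp (-2*Real.pi*Complex.I*z - Real.pi*Complex.I*τ) * theta1 τ z := by
  unfold theta1
  have key : ∀ n : ℤ, (-1:ℂ)^n * Complex.exp (Real.pi*Complex.I*τ*((n:ℂ)-1/2)^2) *
        Complex.exp (2*Real.pi*Complex.I*(z+τ)*((n:ℂ)-1/2))
      = -Complex.exp (-2*Real.pi*Complex.I*z - Real.pi*Complex.I*τ) *
        ((-1:ℂ)^(n+1) * Complex.exp (Real.pi*Complex.I*τ*(((n+1 : ℤ):ℂ)-1/2)^2) *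
          Complex.exp (2*Real.pi*Complex.I*z*(((n+1 : ℤ):ℂ)-1/2))) := by
    intro n
    rw [zpow_add_one₀ (by norm_num : (-1:ℂ) ≠ 0)]
    push_cast
    rw [mul_assoc, ← Complex.exp_add]
    have : -Complex.exp (-2*Real.pi*Complex.I*z - Real.pi*Complex.I*τ) *
        ((-1:ℂ)^n * (-1) * Complex.exp (Real.pi*Complex.I*τ*(((n:ℂ)+1)-1/2)^2) *
          Complex.exp (2*Real.pi*Complex.I*z*(((n:ℂ)+1)-1/2)))
        = (-1:ℂ)^n * Complex.exp ((-2*Real.pi*Complex.I*z - Real.pi*Complex.I*τ) +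
            (Real.pi*Complex.I*τ*(((n:ℂ)+1)-1/2)^2 + 2*Real.pi*Complex.I*z*(((n:ℂ)+1)-1/2))) := by
      rw [Complex.exp_add, Complex.exp_add]; ring
    rw [this]
    congr 1
    ring
  calc Complex.I * ∑' n : ℤ, (-1:ℂ)^n * Complex.exp (Real.pi*Complex.I*τ*((n:ℂ)-1/2)^2) *
        Complex.exp (2*Real.pi*Complex.I*(z+τ)*((n:ℂ)-1/2))
      = Complex.I * ∑' n : ℤ, -Complex.exp (-2*Real.pi*Complex.I*z - Real.pi*Complex.I*τ) *
        ((-1:ℂ)^(n+1) * Complex.exp (Real.pi*Complex.I*τ*(((n+1 : ℤ):ℂ)-1/2)^2) *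
          Complex.exp (2*Real.pi*Complex.I*z*(((n+1 : ℤ):ℂ)-1/2))) := by
        congr 1; exact tsum_congr key
    _ = Complex.I * (-Complex.exp (-2*Real.pi*Complex.I*z - Real.pi*Complex.I*τ) *
        ∑' n : ℤ, ((-1:ℂ)^(n+1) * Complex.exp (Real.pi*Complex.I*τ*(((n+1 : ℤ):ℂ)-1/2)^2) *
          Complex.exp (2*Real.pi*Complex.I*z*(((n+1 : ℤ):ℂ)-1/2)))) := by
        rw [tsum_mul_left]
    _ = -Complex.exp (-2*Real.pi*Complex.I*z - Real.pi*Complex.I*τ) *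
        (Complex.I * ∑' n : ℤ, (-1:ℂ)^n * Complex.exp (Real.pi*Complex.I*τ*((n:ℂ)-1/2)^2) *
          Complex.exp (2*Real.pi*Complex.I*z*((n:ℂ)-1/2))) := by
        have hsum := (Equiv.addRight (1:ℤ)).tsum_eq (fun n : ℤ => (-1:ℂ)^n *
          Complex.exp (Real.pi*Complex.I*τ*((n:ℂ)-1/2)^2) *
          Complex.exp (2*Real.pi*Complex.I*z*((n:ℂ)-1/2)))
        simp only [Equiv.coe_addRight] at hsum
        rw [hsum]
        ring

/-- Z(τ, z+τ; t₁, t₂) = −e^{−6πiz−3πiτ} Z(τ, z; t₁, t₂). -/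
theorem Z_z_add_tau {V : Type*} [Fintype V] (w : V → Fin 3 → ℤ × ℤ)
    (hbal : ∀ v : V, ∑ j : Fin 3, w v j = 0)
    (τ t₁ t₂ : ℂ) (hτ : 0 < τ.im)
    (ht : ∀ (v : V) (j : Fin 3),
      ((w v j).1 : ℂ) * t₁ + ((w v j).2 : ℂ) * t₂ ∉ lattice τ)
    (z : ℂ) :
    Z w τ (z + τ) t₁ t₂ =
      (-Complex.exp (-2 * Real.pi * Complex.I * z - Real.pi * Complex.I * τ)) ^ 3 *
        Z w τ z t₁ t₂ := by
  unfold Z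
  rw [Finset.mul_sum]
  apply Finset.sum_congr rfl
  intro v _
  have hb := hbal v
  rw [Fin.sum_univ_three] at hb
  have ha1 : ((w v 0).1 : ℂ) + ((w v 1).1 : ℂ) + ((w v 2).1 : ℂ) = 0 := by
    have h := congrArg Prod.fst hb
    simp only [Prod.fst_add, Prod.fst_zero] at h
    exact_mod_cast h
  have hb1 : ((w v 0).2 : ℂ) + ((w v 1).2 : ℂ) + ((w v 2).2 : ℂ) = 0 := by
    have h := congrArg Prod.snd hb
    simp only [Prod.snd_add, Prod.snd_zero] at h
    exact_mod_cast h
  have key : ∀ j : Fin 3,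
      theta1 τ (z + τ + ((w v j).1 : ℂ) * t₁ + ((w v j).2 : ℂ) * t₂) =
      -Complex.exp (-2*Real.pi*Complex.I*(z + ((w v j).1 : ℂ) * t₁ + ((w v j).2 : ℂ) * t₂)
          - Real.pi*Complex.I*τ) *
        theta1 τ (z + ((w v j).1 : ℂ) * t₁ + ((w v j).2 : ℂ) * t₂) := by
    intro j
    rw [show z + τ + ((w v j).1 : ℂ) * t₁ + ((w v j).2 : ℂ) * t₂
        = (z + ((w v j).1 : ℂ) * t₁ + ((w v j).2 : ℂ) * t₂) + τ by ring]
    exact theta1_quasi τ _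
  calc (∏ j : Fin 3, theta1 τ (z + τ + ((w v j).1 : ℂ) * t₁ + ((w v j).2 : ℂ) * t₂) /
          theta1 τ (((w v j).1 : ℂ) * t₁ + ((w v j).2 : ℂ) * t₂))
      = ∏ j : Fin 3, (-Complex.exp (-2*Real.pi*Complex.I*(z + ((w v j).1 : ℂ) * t₁ +
            ((w v j).2 : ℂ) * t₂) - Real.pi*Complex.I*τ)) *
          (theta1 τ (z + ((w v j).1 : ℂ) * t₁ + ((w v j).2 : ℂ) * t₂) /
            theta1 τ (((w v j).1 : ℂ) * t₁ + ((w v j).2 : ℂ) * t₂)) := by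
        refine Finset.prod_congr rfl fun j _ => ?_
        rw [key j, mul_div_assoc]
    _ = (∏ j : Fin 3, -Complex.exp (-2*Real.pi*Complex.I*(z + ((w v j).1 : ℂ) * t₁ +
            ((w v j).2 : ℂ) * t₂) - Real.pi*Complex.I*τ)) *
        ∏ j : Fin 3, theta1 τ (z + ((w v j).1 : ℂ) * t₁ + ((w v j).2 : ℂ) * t₂) /
          theta1 τ (((w v j).1 : ℂ) * t₁ + ((w v j).2 : ℂ) * t₂) := Finset.prod_mul_distrib
    _ = (-Complex.exp (-2 * Real.pi * Complex.I * z - Real.pi * Complex.I * τ)) ^ 3 *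
        ∏ j : Fin 3, theta1 τ (z + ((w v j).1 : ℂ) * t₁ + ((w v j).2 : ℂ) * t₂) /
          theta1 τ (((w v j).1 : ℂ) * t₁ + ((w v j).2 : ℂ) * t₂) := by
        congr 1
        rw [Fin.prod_univ_three]
        have hmul : ∀ a b c : ℂ, (-Complex.exp a) * (-Complex.exp b) * (-Complex.exp c)
            = -Complex.exp (a + b + c) := by
          intro a b c; rw [Complex.exp_add, Complex.exp_add]; ring
        rw [hmul, show (-Complex.exp (-2 * Real.pi * Complex.I * z - Real.pi * Complex.I * τ)) ^ 3
          = -Complex.exp ((-2 * Real.pi * Complex.I * z - Real.pi * Complex.I * τ) +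
              (-2 * Real.pi * Complex.I * z - Real.pi * Complex.I * τ) +
              (-2 * Real.pi * Complex.I * z - Real.pi * Complex.I * τ)) by
          rw [Complex.exp_add, Complex.exp_add]; ring]
        congr 2
        linear_combination (-2*Real.pi*Complex.I*t₁) * ha1 + (-2*Real.pi*Complex.I*t₂) * hb1
end

section
/- Let V be a finite set and for each v ∈ V let (a¹ᵥ, b¹ᵥ), (a²ᵥ, b²ᵥ), (a³ᵥ, b³ᵥ) ∈ ℤ × ℤ satisfy the balancing condition a¹ᵥ + a²ᵥ + a³ᵥ = 0 and b¹ᵥ + b²ᵥ + b³ᵥ = 0. Let τ be in the complex upper half-plane and t₁, t₂ ∈ ℂ be such that aʲᵥ t₁ + bʲᵥ t₂ ∉ ℤ + τℤ for every v ∈ V and j ∈ {1,2,3}. Then for every z ∈ ℂ, Z(τ, z; t₁+τ, t₂) = Z(τ, z; t₁, t₂) and Z(τ, z; t₁, t₂+τ) = Z(τ, z; t₁, t₂). -/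
open Complex Filter Topology

lemma theta1_shift (τ z : ℂ) (m : ℤ) :
    theta1 τ (z + (m : ℂ) * τ) =
      (-1 : ℂ) ^ m *
        Complex.exp (-(↑Real.pi * Complex.I * τ * (m : ℂ) ^ 2) -
          2 * ↑Real.pi * Complex.I * (m : ℂ) * z) * theta1 τ z := by
  unfold theta1
  set c : ℂ := (-1 : ℂ) ^ m *
      Complex.exp (-(↑Real.pi * Complex.I * τ * (m : ℂ) ^ 2) -
        2 * ↑Real.pi * Complex.I * (m : ℂ) * z) with hc
  set f : ℤ → ℂ := fun n => (-1 : ℂ) ^ n *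
      Complex.exp (↑Real.pi * Complex.I * τ * ((n : ℂ) - 1/2) ^ 2) *
      Complex.exp (2 * ↑Real.pi * Complex.I * z * ((n : ℂ) - 1/2)) with hf
  have key : ∀ n : ℤ, (-1 : ℂ) ^ n *
      Complex.exp (↑Real.pi * Complex.I * τ * ((n : ℂ) - 1/2) ^ 2) *
      Complex.exp (2 * ↑Real.pi * Complex.I * (z + (m : ℂ) * τ) * ((n : ℂ) - 1/2))
      = c * f (n + m) := by
    intro n
    rw [hc, hf]
    simp only
    push_cast
    rw [zpow_add₀ (by norm_num : (-1:ℂ) ≠ 0)]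
    have hsign : (-1 : ℂ) ^ m * (-1 : ℂ) ^ m = 1 := by
      rw [← mul_zpow]; norm_num
    rw [show ((-1:ℂ)^m * Complex.exp (-(↑Real.pi * Complex.I * τ * (m : ℂ) ^ 2) -
        2 * ↑Real.pi * Complex.I * (m : ℂ) * z)) *
        ((-1:ℂ)^n * (-1:ℂ)^m * Complex.exp (↑Real.pi * Complex.I * τ * (((n:ℂ) + (m:ℂ)) - 1/2) ^ 2) *
          Complex.exp (2 * ↑Real.pi * Complex.I * z * (((n:ℂ) + (m:ℂ)) - 1/2)))
      = ((-1:ℂ)^m * (-1:ℂ)^m) * ((-1:ℂ)^n *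
        (Complex.exp (-(↑Real.pi * Complex.I * τ * (m : ℂ) ^ 2) -
          2 * ↑Real.pi * Complex.I * (m : ℂ) * z) *
          Complex.exp (↑Real.pi * Complex.I * τ * (((n:ℂ) + (m:ℂ)) - 1/2) ^ 2) *
          Complex.exp (2 * ↑Real.pi * Complex.I * z * (((n:ℂ) + (m:ℂ)) - 1/2)))) from by ring]
    rw [hsign, one_mul, mul_assoc, ← Complex.exp_add, ← Complex.exp_add,
      ← Complex.exp_add]
    congr 2
    ring
  calc Complex.I * ∑' n : ℤ, (-1 : ℂ) ^ n *
      Complex.exp (↑Real.pi * Complex.I * τ * ((n : ℂ) - 1/2) ^ 2) *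
      Complex.exp (2 * ↑Real.pi * Complex.I * (z + (m : ℂ) * τ) * ((n : ℂ) - 1/2))
      = Complex.I * ∑' n : ℤ, c * f (n + m) := by
        congr 1; exact tsum_congr key
    _ = Complex.I * (c * ∑' n : ℤ, f (n + m)) := by rw [tsum_mul_left]
    _ = Complex.I * (c * ∑' n : ℤ, f n) := by
        rw [show (∑' n : ℤ, f (n + m)) = ∑' n : ℤ, f n from (Equiv.addRight m).tsum_eq f]
    _ = c * (Complex.I * ∑' n : ℤ, f n) := by ring

lemma theta1_ratio (τ z x : ℂ) (m : ℤ) :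
    theta1 τ (z + x + (m : ℂ) * τ) / theta1 τ (x + (m : ℂ) * τ)
      = Complex.exp (-(2 * ↑Real.pi * Complex.I * (m : ℂ) * z)) *
        (theta1 τ (z + x) / theta1 τ x) := by
  rw [show z + x + (m : ℂ) * τ = (z + x) + (m : ℂ) * τ from rfl,
    theta1_shift τ (z + x) m, theta1_shift τ x m,
    mul_div_mul_comm, mul_div_mul_comm,
    div_self (zpow_ne_zero m (by norm_num : (-1:ℂ) ≠ 0)), one_mul,
    ← Complex.exp_sub]
  congr 2
  ring

lemma prod_theta1_ratio (τ z : ℂ) (x : Fin 3 → ℂ) (m : Fin 3 → ℤ)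
    (hm : ∑ j : Fin 3, ((m j : ℤ) : ℂ) = 0) :
    ∏ j : Fin 3, theta1 τ (z + x j + (m j : ℂ) * τ) / theta1 τ (x j + (m j : ℂ) * τ)
      = ∏ j : Fin 3, theta1 τ (z + x j) / theta1 τ (x j) := by
  calc ∏ j : Fin 3, theta1 τ (z + x j + (m j : ℂ) * τ) / theta1 τ (x j + (m j : ℂ) * τ)
      = ∏ j : Fin 3, Complex.exp (-(2 * ↑Real.pi * Complex.I * (m j : ℂ) * z)) *
          (theta1 τ (z + x j) / theta1 τ (x j)) :=
        Finset.prod_congr rfl fun j _ => theta1_ratio τ z (x j) (m j)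
    _ = Complex.exp (∑ j : Fin 3, -(2 * ↑Real.pi * Complex.I * (m j : ℂ) * z)) *
          ∏ j : Fin 3, theta1 τ (z + x j) / theta1 τ (x j) := by
        rw [Finset.prod_mul_distrib, Complex.exp_sum]
    _ = ∏ j : Fin 3, theta1 τ (z + x j) / theta1 τ (x j) := by
        have hs : (∑ j : Fin 3, -(2 * ↑Real.pi * Complex.I * (m j : ℂ) * z)) = 0 := by
          have h1 : ∑ j : Fin 3, -(2 * ↑Real.pi * Complex.I * (m j : ℂ) * z)
              = (-(2 * ↑Real.pi * Complex.I * z)) * ∑ j : Fin 3, ((m j : ℤ) : ℂ) := by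
            rw [Finset.mul_sum]
            exact Finset.sum_congr rfl fun j _ => by ring
          rw [h1, hm, mul_zero]
        rw [hs, Complex.exp_zero, one_mul]

/-- Z(τ, z; t₁+τ, t₂) = Z(τ, z; t₁, t₂) and Z(τ, z; t₁, t₂+τ) = Z(τ, z; t₁, t₂). -/
theorem Z_t_add_tau {V : Type*} [Fintype V] (w : V → Fin 3 → ℤ × ℤ)
    (hbal : ∀ v : V, ∑ j : Fin 3, w v j = 0)
    (τ t₁ t₂ : ℂ) (hτ : 0 < τ.im)
    (ht : ∀ (v : V) (j : Fin 3),
      ((w v j).1 : ℂ) * t₁ + ((w v j).2 : ℂ) * t₂ ∉ lattice τ)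
    (z : ℂ) :
    Z w τ z (t₁ + τ) t₂ = Z w τ z t₁ t₂ ∧ Z w τ z t₁ (t₂ + τ) = Z w τ z t₁ t₂ := by
  constructor
  · unfold Z
    refine Finset.sum_congr rfl fun v _ => ?_
    have hsum : ∑ j : Fin 3, (((w v j).1 : ℤ) : ℂ) = 0 := by
      have h1 : (∑ j : Fin 3, w v j).1 = 0 := by rw [hbal v]; rfl
      rw [Prod.fst_sum] at h1
      exact_mod_cast h1
    have := prod_theta1_ratio τ z
      (fun j => ((w v j).1 : ℂ) * t₁ + ((w v j).2 : ℂ) * t₂) (fun j => (w v j).1) hsum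
    calc ∏ j : Fin 3, theta1 τ (z + ((w v j).1 : ℂ) * (t₁ + τ) + ((w v j).2 : ℂ) * t₂) /
          theta1 τ (((w v j).1 : ℂ) * (t₁ + τ) + ((w v j).2 : ℂ) * t₂)
        = ∏ j : Fin 3, theta1 τ (z + (((w v j).1 : ℂ) * t₁ + ((w v j).2 : ℂ) * t₂) +
            ((w v j).1 : ℂ) * τ) /
          theta1 τ ((((w v j).1 : ℂ) * t₁ + ((w v j).2 : ℂ) * t₂) + ((w v j).1 : ℂ) * τ) := by
          exact Finset.prod_congr rfl fun j _ => by rw [show z + ((w v j).1 : ℂ) * (t₁ + τ) +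
            ((w v j).2 : ℂ) * t₂ = z + (((w v j).1 : ℂ) * t₁ + ((w v j).2 : ℂ) * t₂) +
            ((w v j).1 : ℂ) * τ from by ring, show ((w v j).1 : ℂ) * (t₁ + τ) +
            ((w v j).2 : ℂ) * t₂ = (((w v j).1 : ℂ) * t₁ + ((w v j).2 : ℂ) * t₂) +
            ((w v j).1 : ℂ) * τ from by ring]
      _ = ∏ j : Fin 3, theta1 τ (z + ((w v j).1 : ℂ) * t₁ + ((w v j).2 : ℂ) * t₂) /
          theta1 τ (((w v j).1 : ℂ) * t₁ + ((w v j).2 : ℂ) * t₂) := by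
          rw [this]
          exact Finset.prod_congr rfl fun j _ => by rw [add_assoc]
  · unfold Z
    refine Finset.sum_congr rfl fun v _ => ?_
    have hsum : ∑ j : Fin 3, (((w v j).2 : ℤ) : ℂ) = 0 := by
      have h1 : (∑ j : Fin 3, w v j).2 = 0 := by rw [hbal v]; rfl
      rw [Prod.snd_sum] at h1
      exact_mod_cast h1
    have := prod_theta1_ratio τ z
      (fun j => ((w v j).1 : ℂ) * t₁ + ((w v j).2 : ℂ) * t₂) (fun j => (w v j).2) hsum
    calc ∏ j : Fin 3, theta1 τ (z + ((w v j).1 : ℂ) * t₁ + ((w v j).2 : ℂ) * (t₂ + τ)) /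
          theta1 τ (((w v j).1 : ℂ) * t₁ + ((w v j).2 : ℂ) * (t₂ + τ))
        = ∏ j : Fin 3, theta1 τ (z + (((w v j).1 : ℂ) * t₁ + ((w v j).2 : ℂ) * t₂) +
            ((w v j).2 : ℂ) * τ) /
          theta1 τ ((((w v j).1 : ℂ) * t₁ + ((w v j).2 : ℂ) * t₂) + ((w v j).2 : ℂ) * τ) := by
          exact Finset.prod_congr rfl fun j _ => by rw [show z + ((w v j).1 : ℂ) * t₁ +
            ((w v j).2 : ℂ) * (t₂ + τ) = z + (((w v j).1 : ℂ) * t₁ + ((w v j).2 : ℂ) * t₂) +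
            ((w v j).2 : ℂ) * τ from by ring, show ((w v j).1 : ℂ) * t₁ +
            ((w v j).2 : ℂ) * (t₂ + τ) = (((w v j).1 : ℂ) * t₁ + ((w v j).2 : ℂ) * t₂) +
            ((w v j).2 : ℂ) * τ from by ring]
      _ = ∏ j : Fin 3, theta1 τ (z + ((w v j).1 : ℂ) * t₁ + ((w v j).2 : ℂ) * t₂) /
          theta1 τ (((w v j).1 : ℂ) * t₁ + ((w v j).2 : ℂ) * t₂) := by
          rw [this]
          exact Finset.prod_congr rfl fun j _ => by rw [add_assoc]
end
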